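/- arXiv:1704.08077 — 4 statements merged into one kernel-verified Lean document; each statement's English description precedes it below -/
import Mathlib

section
/- Let G : [0,∞) → ℝ be convex, non-decreasing with G(0) = 0. If a ≤ b and c ≤ d are real numbers, then G(|a - c|) + G(|b - d|) ≤ G(|d - a|) + G(|b - c|). -/
lemma chord_aux (G : ℝ → ℝ) (hGconv : ConvexOn ℝ (Set.Ici 0) G)
    {p x y : ℝ} (hp : 0 ≤ p) (hpx : p ≤ x) (hpy : p ≤ y) :
    G x + G y ≤ G p + G (x + y - p) := by
  set t := x + y - p with ht
  have hxt : x ≤ t := by simp only [ht]; linarith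
  rcases eq_or_lt_of_le hpx with rfl | hlt
  · have : t = y := by simp [ht]
    rw [this]
  · have ht0 : 0 ≤ t := by linarith
    have hden : 0 < t - p := by linarith
    set l := (t - x) / (t - p) with hl
    have hl0 : 0 ≤ l := div_nonneg (by linarith) (by linarith)
    have hl1 : l ≤ 1 := by
      rw [hl, div_le_one hden]; linarith
    have hcombx : l * p + (1 - l) * t = x := by
      have e : l * (t - p) = t - x := by rw [hl]; exact div_mul_cancel₀ _ hden.ne'
      linear_combination (-1 : ℝ) * e
    have hcomby : (1 - l) * p + l * t = y := by
      have e : l * (t - p) = t - x := by rw [hl]; exact div_mul_cancel₀ _ hden.ne'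
      linear_combination e + ht
    have h1 := hGconv.2 (Set.mem_Ici.mpr hp) (Set.mem_Ici.mpr ht0) hl0
      (by linarith : (0:ℝ) ≤ 1 - l) (by ring : l + (1 - l) = 1)
    have h2 := hGconv.2 (Set.mem_Ici.mpr hp) (Set.mem_Ici.mpr ht0)
      (by linarith : (0:ℝ) ≤ 1 - l) hl0 (by ring : (1 - l) + l = 1)
    simp only [smul_eq_mul] at h1 h2
    rw [hcombx] at h1
    rw [hcomby] at h2
    linarith

theorem young_two_point_ineq (G : ℝ → ℝ) (hG0 : G 0 = 0)
    (hGmono : MonotoneOn G (Set.Ici 0)) (hGconv : ConvexOn ℝ (Set.Ici 0) G)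
    (a b c d : ℝ) (hab : a ≤ b) (hcd : c ≤ d) :
    G |a - c| + G |b - d| ≤ G |d - a| + G |b - c| := by
  set x := |a - c| with hx
  set y := |b - d| with hy
  set u := |d - a| with hu
  set v := |b - c| with hv
  have hx0 : 0 ≤ x := abs_nonneg _
  have hy0 : 0 ≤ y := abs_nonneg _
  have hu0 : 0 ≤ u := abs_nonneg _
  have hv0 : 0 ≤ v := abs_nonneg _
  have hsum : x + y ≤ u + v := by
    rcases abs_cases (a - c) with ⟨h1, h1'⟩ | ⟨h1, h1'⟩ <;>
    rcases abs_cases (b - d) with ⟨h2, h2'⟩ | ⟨h2, h2'⟩ <;>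
    rcases abs_cases (d - a) with ⟨h3, h3'⟩ | ⟨h3, h3'⟩ <;>
    rcases abs_cases (b - c) with ⟨h4, h4'⟩ | ⟨h4, h4'⟩ <;>
    simp only [hx, hy, hu, hv] <;> linarith
  have hxM : x ≤ max u v := by
    rcases le_total a c with h | h
    · refine le_max_of_le_left ?_
      rw [hx, hu, abs_of_nonpos (by linarith), abs_of_nonneg (by linarith)]
      linarith
    · refine le_max_of_le_right ?_
      rw [hx, hv, abs_of_nonneg (by linarith), abs_of_nonneg (by linarith)]
      linarith
  have hyM : y ≤ max u v := by
    rcases le_total b d with h | h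
    · refine le_max_of_le_left ?_
      rw [hy, hu, abs_of_nonpos (by linarith), abs_of_nonneg (by linarith)]
      linarith
    · refine le_max_of_le_right ?_
      rw [hy, hv, abs_of_nonneg (by linarith), abs_of_nonneg (by linarith)]
      linarith
  set m := min u v with hm
  set M := max u v with hM
  have hm0 : 0 ≤ m := le_min hu0 hv0
  have hmM : m ≤ M := min_le_max
  have hGsum : G u + G v = G m + G M := by
    rcases le_total u v with h | h
    · rw [hm, hM, min_eq_left h, max_eq_right h]
    · rw [hm, hM, min_eq_right h, max_eq_left h]; ring
  rw [show G u + G v = G m + G M from hGsum]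
  by_cases hxm : x ≤ m
  · have := hGmono (Set.mem_Ici.mpr hx0) (Set.mem_Ici.mpr hm0) hxm
    have := hGmono (Set.mem_Ici.mpr hy0) (Set.mem_Ici.mpr (hm0.trans hmM)) hyM
    linarith
  · by_cases hym : y ≤ m
    · have := hGmono (Set.mem_Ici.mpr hy0) (Set.mem_Ici.mpr hm0) hym
      have := hGmono (Set.mem_Ici.mpr hx0) (Set.mem_Ici.mpr (hm0.trans hmM)) hxM
      linarith
    · push_neg at hxm hym
      have key := chord_aux G hGconv hm0 hxm.le hym.le
      have harg : x + y - m ≤ M := by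
        have : m + M = u + v := min_add_max u v
        linarith
      have harg0 : 0 ≤ x + y - m := by linarith
      have := hGmono (Set.mem_Ici.mpr harg0) (Set.mem_Ici.mpr (hm0.trans hmM)) harg
      linarith
end

section
/- Let H ⊆ ℝ^N be a closed half-space with reflection σ_H, u : ℝ^N → ℝ⁺ measurable, G : [0,∞) → ℝ a Young function (convex, non-decreasing, G(0)=0), and w : [0,∞) → [0,∞) non-increasing. Then ∫∫_{ℝ^N×ℝ^N} G(|u^H(x) − u^H(y)|) w(|x−y|) dx dy ≤ ∫∫_{ℝ^N×ℝ^N} G(|u(x) − u(y)|) w(|x−y|) dx dy (Riesz two-point inequality for polarization). -/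
open MeasureTheory
open scoped ENNReal


private lemma convex_quadrangle {g : ℝ → ℝ} (hg : ConvexOn ℝ Set.univ g)
    {x1 x2 y1 y2 : ℝ} (h1 : y2 ≤ x1) (h2 : x1 ≤ y1) (hsum : x1 + x2 = y1 + y2) :
    g x1 + g x2 ≤ g y1 + g y2 := by
  rcases eq_or_lt_of_le (h1.trans h2) with h | h
  · have hx1 : x1 = y1 := le_antisymm h2 (h ▸ h1)
    have hx2 : x2 = y2 := by linarith
    rw [hx1, hx2]
  · set l := (x1 - y2) / (y1 - y2) with hl
    have hd : y1 - y2 ≠ 0 := by linarith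
    have hl0 : 0 ≤ l := div_nonneg (by linarith) (by linarith)
    have hl1 : l ≤ 1 := by rw [hl, div_le_one (by linarith)]; linarith
    have hml : l * (y1 - y2) = x1 - y2 := div_mul_cancel₀ _ hd
    have e1 : x1 = l * y1 + (1 - l) * y2 := by nlinarith [hml]
    have e2 : x2 = (1 - l) * y1 + l * y2 := by nlinarith [hml]
    have c1 := hg.2 (Set.mem_univ y1) (Set.mem_univ y2) hl0
      (show (0:ℝ) ≤ 1 - l by linarith) (by ring)
    have c2 := hg.2 (Set.mem_univ y1) (Set.mem_univ y2)
      (show (0:ℝ) ≤ 1 - l by linarith) hl0 (by ring)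
    simp only [smul_eq_mul] at c1 c2
    rw [← e1] at c1
    rw [← e2] at c2
    linarith

private lemma convexOn_comp_abs {G : ℝ → ℝ} (hGmono : MonotoneOn G (Set.Ici 0))
    (hGconv : ConvexOn ℝ (Set.Ici 0) G) : ConvexOn ℝ Set.univ (fun t => G |t|) := by
  refine ⟨convex_univ, ?_⟩
  intro x _ y _ a b ha hb hab
  simp only [smul_eq_mul]
  calc G |a * x + b * y| ≤ G (a * |x| + b * |y|) := by
        refine hGmono (Set.mem_Ici.mpr (abs_nonneg _)) (Set.mem_Ici.mpr (by positivity)) ?_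
        calc |a * x + b * y| ≤ |a * x| + |b * y| := abs_add_le _ _
          _ = a * |x| + b * |y| := by
              rw [abs_mul, abs_mul, abs_of_nonneg ha, abs_of_nonneg hb]
    _ ≤ a * G |x| + b * G |y| := by
        have := hGconv.2 (Set.mem_Ici.mpr (abs_nonneg x)) (Set.mem_Ici.mpr (abs_nonneg y)) ha hb hab
        simpa using this

private lemma abs_quadrangle {G : ℝ → ℝ} (hGmono : MonotoneOn G (Set.Ici 0))
    (hGconv : ConvexOn ℝ (Set.Ici 0) G) {a b p q : ℝ} (hab : b ≤ a) (hpq : p ≤ q) :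
    G |a - q| + G |b - p| ≤ G |a - p| + G |b - q| :=
  convex_quadrangle (convexOn_comp_abs hGmono hGconv)
    (by linarith : b - q ≤ a - q) (by linarith : a - q ≤ a - p) (by ring)

private lemma four_point {G : ℝ → ℝ} (hGmono : MonotoneOn G (Set.Ici 0))
    (hGconv : ConvexOn ℝ (Set.Ici 0) G) {a b p q w1 w2 : ℝ} (hw2 : 0 ≤ w2) (hw12 : w2 ≤ w1) :
    G |max a b - max p q| * w1 + G |max a b - min p q| * w2 +
      G |min a b - max p q| * w2 + G |min a b - min p q| * w1 ≤
    G |a - p| * w1 + G |a - q| * w2 + G |b - p| * w2 + G |b - q| * w1 := by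
  rcases le_total b a with hba | hba <;> rcases le_total p q with hpq | hpq
  · rw [max_eq_left hba, min_eq_right hba, max_eq_right hpq, min_eq_left hpq]
    have h := abs_quadrangle hGmono hGconv hba hpq
    nlinarith [mul_nonneg (sub_nonneg.2 hw12) (sub_nonneg.2 h)]
  · rw [max_eq_left hba, min_eq_right hba, max_eq_left hpq, min_eq_right hpq]
  · rw [max_eq_right hba, min_eq_left hba, max_eq_right hpq, min_eq_left hpq]
    linarith
  · rw [max_eq_right hba, min_eq_left hba, max_eq_left hpq, min_eq_right hpq]
    have h := abs_quadrangle hGmono hGconv hba hpq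
    nlinarith [mul_nonneg (sub_nonneg.2 hw12) (sub_nonneg.2 h)]


/-- Riesz two-point inequality: polarization does not increase the nonlocal energy
`∬ G(|u(x) - u(y)|) w(|x - y|) dx dy` for a Young function `G` and a nonnegative
non-increasing kernel `w`. `H = {x : ⟪x, e⟫ ≥ c}` with `0 ∈ H`, `σ` the reflection. -/
theorem riesz_two_point_inequality (N : ℕ) (e : EuclideanSpace ℝ (Fin N)) (he : ‖e‖ = 1)
    (c : ℝ) (hc : c ≤ 0)
    (u : EuclideanSpace ℝ (Fin N) → ℝ) (hu : ∀ x, 0 ≤ u x) (humeas : Measurable u)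
    (σ : EuclideanSpace ℝ (Fin N) → EuclideanSpace ℝ (Fin N))
    (hσ : ∀ x, σ x = x - (2 * ((inner ℝ x e : ℝ) - c)) • e)
    (uH : EuclideanSpace ℝ (Fin N) → ℝ)
    (huH : ∀ x, uH x = if c ≤ (inner ℝ x e : ℝ) then max (u x) (u (σ x))
      else min (u x) (u (σ x)))
    (G : ℝ → ℝ) (hG0 : G 0 = 0) (hGmono : MonotoneOn G (Set.Ici 0))
    (hGconv : ConvexOn ℝ (Set.Ici 0) G)
    (w : ℝ → ℝ) (hw0 : ∀ r : ℝ, 0 ≤ r → 0 ≤ w r) (hwa : AntitoneOn w (Set.Ici 0)) :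
    ∫⁻ x, ∫⁻ y, ENNReal.ofReal (G |uH x - uH y| * w ‖x - y‖) ≤
      ∫⁻ x, ∫⁻ y, ENNReal.ofReal (G |u x - u y| * w ‖x - y‖) := by
  classical
  have hee : (inner ℝ e e : ℝ) = 1 := by
    rw [real_inner_self_eq_norm_mul_norm, he]; norm_num
  -- inner product of the reflection
  have hinσ : ∀ x, (inner ℝ (σ x) e : ℝ) = 2 * c - inner ℝ x e := by
    intro x
    rw [hσ x, inner_sub_left, real_inner_smul_left, hee]; ring
  -- σ is an involution
  have hσσ : ∀ x, σ (σ x) = x := by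
    intro x
    rw [hσ (σ x), hinσ x, hσ x, sub_sub, ← add_smul]
    have : 2 * ((inner ℝ x e : ℝ) - c) + 2 * (2 * c - (inner ℝ x e : ℝ) - c) = 0 := by ring
    rw [this, zero_smul, sub_zero]
  -- σ as an affine isometry
  obtain ⟨L, hLσ⟩ : ∃ L : EuclideanSpace ℝ (Fin N) ≃ₗᵢ[ℝ] EuclideanSpace ℝ (Fin N),
      ∀ x, σ x = L x + (2 * c) • e := by
    refine ⟨((ℝ ∙ e).reflection).trans (LinearIsometryEquiv.neg ℝ), fun x => ?_⟩
    have hproj : ((ℝ ∙ e).starProjection x : EuclideanSpace ℝ (Fin N))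
        = (inner ℝ e x : ℝ) • e := by
      rw [Submodule.starProjection_singleton, he]; norm_num
    simp only [LinearIsometryEquiv.trans_apply, LinearIsometryEquiv.coe_neg,
      Submodule.reflection_apply, hproj, hσ x, real_inner_comm x e]
    rw [two_smul]
    module
  have hσcont : Continuous σ := by
    have : σ = fun x => L x + (2 * c) • e := funext hLσ
    rw [this]
    exact (L.continuous.add continuous_const)
  have hσmeas : Measurable σ := hσcont.measurable
  have hmp : MeasurePreserving σ volume volume := by
    have hcomp : σ = (fun z => z + (2 * c) • e) ∘ L := funext fun x => hLσ x
    rw [hcomp]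
    exact (measurePreserving_add_right volume _).comp L.measurePreserving
  have hnormσ : ∀ x y, ‖σ x - σ y‖ = ‖x - y‖ := by
    intro x y
    rw [hLσ, hLσ, add_sub_add_right_eq_sub, ← map_sub, L.norm_map]
  have hcross : ∀ x y, ‖σ x - y‖ = ‖x - σ y‖ := by
    intro x y
    have h := hnormσ (σ x) y
    rw [hσσ x] at h
    exact h.symm
  -- the two open half spaces
  set S : Set (EuclideanSpace ℝ (Fin N)) := {x | c < (inner ℝ x e : ℝ)} with hSdef
  set T : Set (EuclideanSpace ℝ (Fin N)) := {x | (inner ℝ x e : ℝ) < c} with hTdef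
  have hφmeas : Measurable fun x : EuclideanSpace ℝ (Fin N) => (inner ℝ x e : ℝ) :=
    (continuous_id.inner continuous_const).measurable
  have hSmeas : MeasurableSet S := measurableSet_lt measurable_const hφmeas
  have hTmeas : MeasurableSet T := measurableSet_lt hφmeas measurable_const
  have hdisj : Disjoint S T := by
    rw [Set.disjoint_left]
    intro x hx hx'
    have h1 : c < (inner ℝ x e : ℝ) := hx
    have h2 : (inner ℝ x e : ℝ) < c := hx'
    linarith
  -- complement of S ∪ T is the boundary hyperplane, which is null
  have hnull : volume (S ∪ T)ᶜ = 0 := by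
    have hker : LinearMap.ker (innerSL ℝ e : EuclideanSpace ℝ (Fin N) →ₗ[ℝ] ℝ) ≠ ⊤ := by
      intro htop
      have : e ∈ LinearMap.ker (innerSL ℝ e : EuclideanSpace ℝ (Fin N) →ₗ[ℝ] ℝ) := htop ▸ Submodule.mem_top
      rw [LinearMap.mem_ker] at this
      simp only [ContinuousLinearMap.coe_coe, innerSL_apply_apply] at this
      rw [hee] at this
      norm_num at this
    have hset : (S ∪ T)ᶜ = (fun x => x + -(c • e)) ⁻¹'
        ((LinearMap.ker (innerSL ℝ e : EuclideanSpace ℝ (Fin N) →ₗ[ℝ] ℝ) : Submodule ℝ (EuclideanSpace ℝ (Fin N))) : Set _) := by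
      ext x
      simp only [Set.mem_compl_iff, Set.mem_union, hSdef, hTdef, Set.mem_setOf_eq, not_or,
        not_lt, Set.mem_preimage, SetLike.mem_coe, LinearMap.mem_ker, ContinuousLinearMap.coe_coe, innerSL_apply_apply]
      rw [inner_add_right, inner_neg_right, real_inner_smul_right, hee, real_inner_comm]
      constructor
      · rintro ⟨h1, h2⟩; have := le_antisymm h2 h1; rw [this]; ring
      · intro h; constructor <;> nlinarith
    rw [hset, measure_preimage_add_right]
    exact Measure.addHaar_submodule volume _ hker
  have hrestr : volume.restrict (S ∪ T) = volume :=
    (Measure.restrict_congr_set (MeasureTheory.ae_eq_univ.mpr hnull)).trans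
      Measure.restrict_univ
  have hσpreT : σ ⁻¹' T = S := by
    ext x
    simp only [Set.mem_preimage, hTdef, hSdef, Set.mem_setOf_eq, hinσ x]
    constructor <;> intro h <;> linarith
  have hmpST : MeasurePreserving σ (volume.restrict S) (volume.restrict T) := by
    have h := hmp.restrict_preimage hTmeas
    rwa [hσpreT] at h
  -- splitting lemma for lintegrals
  have split : ∀ g : EuclideanSpace ℝ (Fin N) → ℝ≥0∞, Measurable g →
      ∫⁻ z, g z = ∫⁻ z in S, (g z + g (σ z)) := by
    intro g hg
    have h1 : ∫⁻ z, g z = ∫⁻ z in S ∪ T, g z := by rw [hrestr]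
    have h2 : ∫⁻ z in T, g z = ∫⁻ z in S, g (σ z) := (hmpST.lintegral_comp hg).symm
    rw [h1, lintegral_union hTmeas hdisj, h2, ← lintegral_add_left hg]
  -- measurability of the building blocks
  have hGabs : Measurable fun t : ℝ => G |t| := by
    have hmono : Monotone fun t => G (max t 0) := fun s t hst =>
      hGmono (Set.mem_Ici.mpr (le_max_right _ _)) (Set.mem_Ici.mpr (le_max_right _ _))
        (max_le_max hst le_rfl)
    have : (fun t : ℝ => G |t|) = (fun t => G (max t 0)) ∘ fun t : ℝ => |t| := by
      funext t; simp [max_eq_left (abs_nonneg t)]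
    rw [this]
    exact hmono.measurable.comp measurable_abs
  have hwmax : Measurable fun t : ℝ => w (max t 0) := by
    have hanti : Antitone fun t => w (max t 0) := fun s t hst =>
      hwa (Set.mem_Ici.mpr (le_max_right _ _)) (Set.mem_Ici.mpr (le_max_right _ _))
        (max_le_max hst le_rfl)
    exact hanti.measurable
  have hker : ∀ v : EuclideanSpace ℝ (Fin N) → ℝ, Measurable v →
      Measurable fun p : EuclideanSpace ℝ (Fin N) × EuclideanSpace ℝ (Fin N) =>
        ENNReal.ofReal (G |v p.1 - v p.2| * w ‖p.1 - p.2‖) := by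
    intro v hv
    have h1 : Measurable fun p : EuclideanSpace ℝ (Fin N) × EuclideanSpace ℝ (Fin N) =>
        G |v p.1 - v p.2| :=
      hGabs.comp ((hv.comp measurable_fst).sub (hv.comp measurable_snd))
    have h2 : Measurable fun p : EuclideanSpace ℝ (Fin N) × EuclideanSpace ℝ (Fin N) =>
        w ‖p.1 - p.2‖ := by
      have : (fun p : EuclideanSpace ℝ (Fin N) × EuclideanSpace ℝ (Fin N) => w ‖p.1 - p.2‖)
          = (fun t => w (max t 0)) ∘
            fun p : EuclideanSpace ℝ (Fin N) × EuclideanSpace ℝ (Fin N) => ‖p.1 - p.2‖ := by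
        funext p; simp [max_eq_left (norm_nonneg _)]
      rw [this]
      exact hwmax.comp (measurable_fst.sub measurable_snd).norm
    exact (h1.mul h2).ennreal_ofReal
  have huHmeas : Measurable uH := by
    have h : uH = fun x => if c ≤ (inner ℝ x e : ℝ) then max (u x) (u (σ x))
        else min (u x) (u (σ x)) := funext huH
    rw [h]
    exact Measurable.ite (measurableSet_le measurable_const hφmeas)
      (humeas.max (humeas.comp hσmeas)) (humeas.min (humeas.comp hσmeas))
  -- decomposition of the double integral
  have decomp : ∀ v : EuclideanSpace ℝ (Fin N) → ℝ, Measurable v →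
      (∫⁻ x, ∫⁻ y, ENNReal.ofReal (G |v x - v y| * w ‖x - y‖)) =
      ∫⁻ x in S, ∫⁻ y in S,
          (ENNReal.ofReal (G |v x - v y| * w ‖x - y‖) +
           ENNReal.ofReal (G |v x - v (σ y)| * w ‖x - σ y‖) +
           ENNReal.ofReal (G |v (σ x) - v y| * w ‖σ x - y‖) +
           ENNReal.ofReal (G |v (σ x) - v (σ y)| * w ‖σ x - σ y‖)) := by
    intro v hv
    have hFm := hker v hv
    set F : EuclideanSpace ℝ (Fin N) → EuclideanSpace ℝ (Fin N) → ℝ≥0∞ :=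
      fun x y => ENNReal.ofReal (G |v x - v y| * w ‖x - y‖) with hF
    have hFx : ∀ x, Measurable (F x) := fun x => hFm.comp measurable_prodMk_left
    have inner_eq : ∀ x, ∫⁻ y, F x y = ∫⁻ y in S, (F x y + F x (σ y)) :=
      fun x => split (F x) (hFx x)
    have hΦmeas : Measurable fun x => ∫⁻ y in S, (F x y + F x (σ y)) := by
      apply Measurable.lintegral_prod_right
      exact hFm.add (hFm.comp (measurable_fst.prodMk (hσmeas.comp measurable_snd)))
    calc ∫⁻ x, ∫⁻ y, F x y
        = ∫⁻ x, ∫⁻ y in S, (F x y + F x (σ y)) := lintegral_congr fun x => inner_eq x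
      _ = ∫⁻ x in S, ((∫⁻ y in S, (F x y + F x (σ y)))
            + ∫⁻ y in S, (F (σ x) y + F (σ x) (σ y))) := split _ hΦmeas
      _ = ∫⁻ x in S, ∫⁻ y in S,
            (F x y + F x (σ y) + F (σ x) y + F (σ x) (σ y)) := by
          refine lintegral_congr fun x => ?_
          have hfm : Measurable fun y => F x y + F x (σ y) :=
            (hFx x).add ((hFx x).comp hσmeas)
          rw [← lintegral_add_left hfm]
          exact lintegral_congr fun y => by ring
  -- comparison of cross distances
  have hcmp : ∀ x y : EuclideanSpace ℝ (Fin N), x ∈ S → y ∈ S → ‖x - y‖ ≤ ‖x - σ y‖ := by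
    intro x y hx hy
    have hx' : c < (inner ℝ x e : ℝ) := hx
    have hy' : c < (inner ℝ y e : ℝ) := hy
    have hxy : x - σ y = (x - y) + (2 * ((inner ℝ y e : ℝ) - c)) • e := by
      rw [hσ y]; abel
    have hsq : ‖x - σ y‖ ^ 2 = ‖x - y‖ ^ 2
        + 4 * ((inner ℝ y e : ℝ) - c) * ((inner ℝ x e : ℝ) - c) := by
      rw [hxy, norm_add_sq_real, real_inner_smul_right, inner_sub_left, norm_smul, he]
      simp only [mul_one, Real.norm_eq_abs, mul_pow, sq_abs]
      ring
    nlinarith [norm_nonneg (x - y), norm_nonneg (x - σ y),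
      mul_pos (sub_pos.mpr hy') (sub_pos.mpr hx')]
  -- nonnegativity of G on absolute values
  have hGnn : ∀ t : ℝ, 0 ≤ G |t| := by
    intro t
    have h := hGmono (Set.mem_Ici.mpr le_rfl) (Set.mem_Ici.mpr (abs_nonneg t)) (abs_nonneg t)
    rwa [hG0] at h
  -- put everything together
  rw [decomp uH huHmeas, decomp u humeas]
  refine lintegral_mono_ae ?_
  filter_upwards [ae_restrict_mem hSmeas] with x hx
  refine lintegral_mono_ae ?_
  filter_upwards [ae_restrict_mem hSmeas] with y hy
  have hx' : c < (inner ℝ x e : ℝ) := hx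
  have hy' : c < (inner ℝ y e : ℝ) := hy
  have huHx : uH x = max (u x) (u (σ x)) := by rw [huH x, if_pos hx'.le]
  have huHy : uH y = max (u y) (u (σ y)) := by rw [huH y, if_pos hy'.le]
  have huHσx : uH (σ x) = min (u x) (u (σ x)) := by
    rw [huH (σ x), if_neg (by rw [hinσ x]; push_neg; linarith), hσσ x, min_comm]
  have huHσy : uH (σ y) = min (u y) (u (σ y)) := by
    rw [huH (σ y), if_neg (by rw [hinσ y]; push_neg; linarith), hσσ y, min_comm]
  have hw1 : 0 ≤ w ‖x - y‖ := hw0 _ (norm_nonneg _)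
  have hw2 : 0 ≤ w ‖x - σ y‖ := hw0 _ (norm_nonneg _)
  have hw21 : w ‖x - σ y‖ ≤ w ‖x - y‖ :=
    hwa (Set.mem_Ici.mpr (norm_nonneg _)) (Set.mem_Ici.mpr (norm_nonneg _)) (hcmp x y hx hy)
  rw [huHx, huHy, huHσx, huHσy, hcross x y, hnormσ x y]
  have key := four_point hGmono hGconv (a := u x) (b := u (σ x)) (p := u y) (q := u (σ y))
    hw2 hw21
  rw [← ENNReal.ofReal_add (mul_nonneg (hGnn _) hw1) (mul_nonneg (hGnn _) hw2),
    ← ENNReal.ofReal_add (add_nonneg (mul_nonneg (hGnn _) hw1) (mul_nonneg (hGnn _) hw2))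
      (mul_nonneg (hGnn _) hw2),
    ← ENNReal.ofReal_add (add_nonneg (add_nonneg (mul_nonneg (hGnn _) hw1)
      (mul_nonneg (hGnn _) hw2)) (mul_nonneg (hGnn _) hw2)) (mul_nonneg (hGnn _) hw1),
    ← ENNReal.ofReal_add (mul_nonneg (hGnn _) hw1) (mul_nonneg (hGnn _) hw2),
    ← ENNReal.ofReal_add (add_nonneg (mul_nonneg (hGnn _) hw1) (mul_nonneg (hGnn _) hw2))
      (mul_nonneg (hGnn _) hw2),
    ← ENNReal.ofReal_add (add_nonneg (add_nonneg (mul_nonneg (hGnn _) hw1)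
      (mul_nonneg (hGnn _) hw2)) (mul_nonneg (hGnn _) hw2)) (mul_nonneg (hGnn _) hw1)]
  exact ENNReal.ofReal_le_ofReal (by linarith [key])
end

section
/- Polarization does not decrease the fractional Gagliardo seminorm: for H a closed half-space of ℝ^N containing 0, s ∈ (0,1), p ≥ 1, and u : ℝ^N → ℝ⁺ measurable, ∫∫ |u^H(x)−u^H(y)|^p / |x−y|^{N+ps} dx dy ≤ ∫∫ |u(x)−u(y)|^p / |x−y|^{N+ps} dx dy. -/
open MeasureTheory Set

lemma pg_convexOn_abs_rpow {p : ℝ} (hp : 1 ≤ p) :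
    ConvexOn ℝ Set.univ (fun t : ℝ => |t| ^ p) := by
  refine ⟨convex_univ, fun x _ y _ a b ha hb hab => ?_⟩
  have h1 : |a • x + b • y| ^ p ≤ (a * |x| + b * |y|) ^ p := by
    apply Real.rpow_le_rpow (abs_nonneg _) ?_ (le_trans zero_le_one hp)
    calc |a • x + b • y| ≤ |a • x| + |b • y| := abs_add_le _ _
    _ = a * |x| + b * |y| := by
        simp [smul_eq_mul, abs_mul, abs_of_nonneg ha, abs_of_nonneg hb]
  have h2 := (convexOn_rpow hp).2 (mem_Ici.2 (abs_nonneg x)) (mem_Ici.2 (abs_nonneg y)) ha hb hab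
  simp only [smul_eq_mul] at h2 ⊢
  exact h1.trans h2

lemma pg_majorize {p : ℝ} (hp : 1 ≤ p) {u v U V : ℝ} (hsum : u + v = U + V)
    (h1 : V ≤ u) (h2 : u ≤ U) : |u| ^ p + |v| ^ p ≤ |U| ^ p + |V| ^ p := by
  rcases eq_or_lt_of_le (h1.trans h2) with hUV | hUV
  · have hu : u = U := le_antisymm h2 (hUV ▸ h1)
    have hv : v = V := by linarith
    rw [hu, hv]
  · have hden : (0:ℝ) < U - V := by linarith
    set t : ℝ := (u - V) / (U - V) with ht
    have ht0 : 0 ≤ t := div_nonneg (by linarith) hden.le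
    have ht1 : t ≤ 1 := (div_le_one hden).2 (by linarith)
    have hu : u = t * U + (1 - t) * V := by
      rw [ht]; field_simp; ring
    have hv : v = t * V + (1 - t) * U := by linear_combination hsum - hu
    have hcv := pg_convexOn_abs_rpow hp
    have A := hcv.2 (mem_univ U) (mem_univ V) ht0 (by linarith : (0:ℝ) ≤ 1 - t) (by ring)
    have B := hcv.2 (mem_univ V) (mem_univ U) ht0 (by linarith : (0:ℝ) ≤ 1 - t) (by ring)
    simp only [smul_eq_mul] at A B
    rw [hu, hv]
    linarith [A, B]

lemma pg_two_point {p : ℝ} (hp : 1 ≤ p) (a a' b b' w1 w2 : ℝ) (hw2 : 0 ≤ w2) (hw : w2 ≤ w1) :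
    |max a a' - max b b'| ^ p * w1 + |max a a' - min b b'| ^ p * w2 +
      (|min a a' - max b b'| ^ p * w2 + |min a a' - min b b'| ^ p * w1) ≤
    |a - b| ^ p * w1 + |a - b'| ^ p * w2 + (|a' - b| ^ p * w2 + |a' - b'| ^ p * w1) := by
  rcases le_total a' a with h1 | h1 <;> rcases le_total b' b with h2 | h2
  · rw [max_eq_left h1, min_eq_right h1, max_eq_left h2, min_eq_right h2]
  · rw [max_eq_left h1, min_eq_right h1, max_eq_right h2, min_eq_left h2]
    have maj : |a - b'| ^ p + |a' - b| ^ p ≤ |a - b| ^ p + |a' - b'| ^ p :=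
      pg_majorize hp (by ring) (by linarith) (by linarith)
    nlinarith [maj, abs_nonneg (a - b'), abs_nonneg (a' - b)]
  · rw [max_eq_right h1, min_eq_left h1, max_eq_left h2, min_eq_right h2]
    have maj : |a - b'| ^ p + |a' - b| ^ p ≤ |a' - b'| ^ p + |a - b| ^ p :=
      pg_majorize hp (by ring) (by linarith) (by linarith)
    nlinarith [maj]
  · rw [max_eq_right h1, min_eq_left h1, max_eq_right h2, min_eq_left h2]
    ring_nf
    exact le_refl _

/-- The Gagliardo integrand. -/
noncomputable def pgG (p α : ℝ) {E : Type*} [NormedAddCommGroup E] (f : E → ℝ) (x y : E) :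
    ENNReal := ENNReal.ofReal (|f x - f y| ^ p / ‖x - y‖ ^ α)

set_option maxHeartbeats 1000000 in
lemma pg_meas {W : Type*} [MeasurableSpace W] {p α : ℝ} (hp : 0 ≤ p) (hα : 0 ≤ α)
    {E : Type*} [NormedAddCommGroup E] [MeasurableSpace E] [BorelSpace E]
    [SecondCountableTopology E]
    {f : E → ℝ} (hf : Measurable f) {g h : W → E} (hg : Measurable g) (hh : Measurable h) :
    Measurable (fun w => pgG p α f (g w) (h w)) := by
  apply Measurable.ennreal_ofReal
  apply Measurable.div
  · exact (Real.continuous_rpow_const hp).measurable.comp (((hf.comp hg).sub (hf.comp hh)).abs)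
  · exact (Real.continuous_rpow_const hα).measurable.comp ((hg.sub hh).norm)

/-- Polarization does not increase the fractional Gagliardo seminorm:
`∬ |u^H(x)-u^H(y)|^p / |x-y|^{N+ps} ≤ ∬ |u(x)-u(y)|^p / |x-y|^{N+ps}`.
`H = {x : ⟪x, e⟫ ≥ c}` is a closed half-space containing `0`, `σ` its reflection. -/
theorem polarization_gagliardo_seminorm (N : ℕ) (s p : ℝ) (hs : 0 < s) (hs1 : s < 1)
    (hp : 1 ≤ p) (e : EuclideanSpace ℝ (Fin N)) (he : ‖e‖ = 1) (c : ℝ) (hc : c ≤ 0)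
    (u : EuclideanSpace ℝ (Fin N) → ℝ) (hu : ∀ x, 0 ≤ u x) (humeas : Measurable u)
    (σ : EuclideanSpace ℝ (Fin N) → EuclideanSpace ℝ (Fin N))
    (hσ : ∀ x, σ x = x - (2 * ((inner ℝ x e : ℝ) - c)) • e)
    (uH : EuclideanSpace ℝ (Fin N) → ℝ)
    (huH : ∀ x, uH x = if c ≤ (inner ℝ x e : ℝ) then max (u x) (u (σ x))
      else min (u x) (u (σ x))) :
    ∫⁻ x, ∫⁻ y, ENNReal.ofReal (|uH x - uH y| ^ p / ‖x - y‖ ^ ((N : ℝ) + p * s)) ≤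
      ∫⁻ x, ∫⁻ y, ENNReal.ofReal (|u x - u y| ^ p / ‖x - y‖ ^ ((N : ℝ) + p * s)) := by
  classical
  have hp0 : (0:ℝ) < p := lt_of_lt_of_le one_pos hp
  set α : ℝ := (N : ℝ) + p * s with hα_def
  have hα : 0 < α := add_pos_of_nonneg_of_pos (Nat.cast_nonneg N) (mul_pos hp0 hs)
  have hee : (inner ℝ e e : ℝ) = 1 := by
    rw [real_inner_self_eq_norm_sq, he]; norm_num
  have hinnerσ : ∀ x, (inner ℝ (σ x) e : ℝ) = 2 * c - inner ℝ x e := by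
    intro x
    rw [hσ x]
    rw [inner_sub_left, real_inner_smul_left, hee]
    ring
  have hσσ : ∀ x, σ (σ x) = x := by
    intro x
    rw [hσ (σ x), hinnerσ x, hσ x]
    module
  -- the linear reflection
  have hR : ∀ x, (Submodule.reflection ((ℝ ∙ e)ᗮ)) x = x - (2 * (inner ℝ x e : ℝ)) • e := by
    intro x
    rw [Submodule.reflection_orthogonal_apply, Submodule.reflection_singleton_apply, he, real_inner_comm e x]
    norm_num
    module
  have hσR : ∀ x, σ x = (Submodule.reflection ((ℝ ∙ e)ᗮ)) x + (2 * c) • e := by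
    intro x; rw [hσ x, hR x]; module
  have mpσ : MeasurePreserving σ volume volume := by
    have h1 : MeasurePreserving (Submodule.reflection ((ℝ ∙ e)ᗮ)) volume volume :=
      (Submodule.reflection ((ℝ ∙ e)ᗮ)).measurePreserving
    have h2 := measurePreserving_add_right
      (volume : Measure (EuclideanSpace ℝ (Fin N))) ((2 * c) • e)
    have hco : σ = (fun z => z + (2 * c) • e) ∘ (Submodule.reflection ((ℝ ∙ e)ᗮ)) := funext hσR
    rw [hco]; exact h2.comp h1
  have hcontσ : Continuous σ := by
    have hco : σ = (fun z => z + (2 * c) • e) ∘ (Submodule.reflection ((ℝ ∙ e)ᗮ)) := funext hσR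
    rw [hco]
    exact (continuous_id.add continuous_const).comp (Submodule.reflection ((ℝ ∙ e)ᗮ)).continuous
  have hemb : MeasurableEmbedding σ := by
    let σE : (EuclideanSpace ℝ (Fin N)) ≃ₜ (EuclideanSpace ℝ (Fin N)) :=
      ⟨Function.Involutive.toPerm σ hσσ, hcontσ, hcontσ⟩
    exact σE.toMeasurableEquiv.measurableEmbedding
  have hiso : ∀ x y, ‖σ x - σ y‖ = ‖x - y‖ := by
    intro x y
    rw [hσR x, hσR y, add_sub_add_right_eq_sub, ← map_sub,
      (Submodule.reflection ((ℝ ∙ e)ᗮ)).norm_map]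
  have hσxy : ∀ x y, ‖σ x - y‖ = ‖x - σ y‖ := by
    intro x y
    calc ‖σ x - y‖ = ‖σ x - σ (σ y)‖ := by rw [hσσ y]
    _ = ‖x - σ y‖ := hiso x (σ y)
  set d : EuclideanSpace ℝ (Fin N) → ℝ := fun x => (inner ℝ x e : ℝ) - c with hd
  have hdσ : ∀ x, d (σ x) = - d x := by
    intro x; simp only [hd, hinnerσ x]; ring
  have hsq : ∀ x y, ‖x - σ y‖ ^ 2 = ‖x - y‖ ^ 2 + 4 * d x * d y := by
    intro x y
    have hxy : x - σ y = (x - y) + (2 * ((inner ℝ y e : ℝ) - c)) • e := by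
      rw [hσ y]; module
    rw [hxy, norm_add_sq_real]
    have h2 : (inner ℝ (x - y) ((2 * ((inner ℝ y e : ℝ) - c)) • e) : ℝ)
        = (2 * ((inner ℝ y e : ℝ) - c)) * ((inner ℝ x e : ℝ) - (inner ℝ y e : ℝ)) := by
      rw [real_inner_smul_right, inner_sub_left]
    have h3 : ‖(2 * ((inner ℝ y e : ℝ) - c)) • e‖ ^ 2 = (2 * ((inner ℝ y e : ℝ) - c)) ^ 2 := by
      rw [norm_smul, he, mul_one, Real.norm_eq_abs, sq_abs]
    rw [h2, h3]
    simp only [hd]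
    ring
  have huH_max : ∀ x, 0 < d x → uH x = max (u x) (u (σ x)) := by
    intro x hx
    rw [huH x, if_pos]
    simp only [hd] at hx; linarith
  have huH_min : ∀ x, 0 < d x → uH (σ x) = min (u x) (u (σ x)) := by
    intro x hx
    rw [huH (σ x), if_neg, hσσ x, min_comm]
    rw [hinnerσ x]
    simp only [hd] at hx; intro h; linarith
  have hinner_cont : Continuous (fun x : EuclideanSpace ℝ (Fin N) => (inner ℝ x e : ℝ)) :=
    continuous_id.inner continuous_const
  have huH_meas : Measurable uH := by
    have huHe : uH = fun x => if c ≤ (inner ℝ x e : ℝ) then max (u x) (u (σ x))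
        else min (u x) (u (σ x)) := funext huH
    rw [huHe]
    have hms : MeasurableSet {x : EuclideanSpace ℝ (Fin N) | c ≤ (inner ℝ x e : ℝ)} :=
      measurableSet_le measurable_const hinner_cont.measurable
    exact Measurable.ite hms (humeas.max (humeas.comp hcontσ.measurable))
      (humeas.min (humeas.comp hcontσ.measurable))
  set A : Set (EuclideanSpace ℝ (Fin N)) := {x | 0 < d x} with hAdef
  have hAmeas : MeasurableSet A :=
    measurableSet_lt measurable_const ((hinner_cont.measurable).sub measurable_const)
  -- the hyperplane is null
  have hZ : volume {x : EuclideanSpace ℝ (Fin N) | d x = 0} = 0 := by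
    set W : Submodule ℝ (EuclideanSpace ℝ (Fin N)) :=
      LinearMap.ker ((innerSL ℝ e : EuclideanSpace ℝ (Fin N) →L[ℝ] ℝ) :
        EuclideanSpace ℝ (Fin N) →ₗ[ℝ] ℝ) with hW
    have hWne : W ≠ ⊤ := by
      intro h
      have he2 : e ∈ W := h ▸ Submodule.mem_top
      have h0 : (inner ℝ e e : ℝ) = 0 := he2
      rw [hee] at h0; norm_num at h0
    have hset : {x : EuclideanSpace ℝ (Fin N) | d x = 0}
        = (fun x => x + (-c) • e) ⁻¹' (W : Set (EuclideanSpace ℝ (Fin N))) := by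
      ext x
      simp only [hd, mem_setOf_eq, mem_preimage, SetLike.mem_coe, hW, LinearMap.mem_ker,
        ContinuousLinearMap.coe_coe, innerSL_apply_apply, inner_add_right, real_inner_smul_right,
        real_inner_comm e x]
      rw [hee]
      constructor <;> intro h <;> linarith
    rw [hset, measure_preimage_add_right]
    exact Measure.addHaar_submodule volume W hWne
  -- splitting an integral using the reflection
  have split : ∀ φ : EuclideanSpace ℝ (Fin N) → ENNReal, Measurable φ →
      ∫⁻ z, φ z = ∫⁻ z in A, (φ z + φ (σ z)) := by
    intro φ hφ
    have h1 : ∫⁻ z, φ z = (∫⁻ z in A, φ z) + ∫⁻ z in Aᶜ, φ z :=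
      (lintegral_add_compl φ hAmeas).symm
    have hae : Aᶜ =ᵐ[volume] {z : EuclideanSpace ℝ (Fin N) | d z < 0} := by
      refine (MeasureTheory.ae_eq_set).2 ⟨?_, ?_⟩
      · refine measure_mono_null ?_ hZ
        intro z hz
        have h1 : ¬ (0 < d z) := hz.1
        have h2 : ¬ (d z < 0) := hz.2
        exact le_antisymm (not_lt.1 h1) (not_lt.1 h2)
      · refine measure_mono_null ?_ hZ
        intro z hz
        have h1 : d z < 0 := hz.1
        have h2 : (0:ℝ) < d z := not_not.1 hz.2
        exact absurd h2 (asymm h1)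
    have h2 : ∫⁻ z in Aᶜ, φ z = ∫⁻ z in {z : EuclideanSpace ℝ (Fin N) | d z < 0}, φ z :=
      setLIntegral_congr hae
    have hpre : σ ⁻¹' {z : EuclideanSpace ℝ (Fin N) | d z < 0} = A := by
      ext z
      simp only [mem_preimage, mem_setOf_eq, hdσ z, hAdef, Left.neg_neg_iff]
    have h3 : ∫⁻ z in {z : EuclideanSpace ℝ (Fin N) | d z < 0}, φ z
        = ∫⁻ z in A, φ (σ z) := by
      rw [← mpσ.setLIntegral_comp_preimage_emb hemb φ _, hpre]
    rw [h1, h2, h3, ← lintegral_add_left hφ]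
  have hσm : Measurable σ := hcontσ.measurable
  -- the key identity
  have key : ∀ f : EuclideanSpace ℝ (Fin N) → ℝ, Measurable f →
      (∫⁻ x, ∫⁻ y, pgG p α f x y) = ∫⁻ x in A, ∫⁻ y in A,
        (pgG p α f x y + pgG p α f x (σ y) +
          (pgG p α f (σ x) y + pgG p α f (σ x) (σ y))) := by
    intro f hf
    have hinner1 : ∀ x, Measurable (fun y => pgG p α f x y) :=
      fun x => pg_meas hp0.le hα.le hf measurable_const measurable_id
    have hinner2 : ∀ x, Measurable (fun y => pgG p α f x (σ y)) :=
      fun x => pg_meas hp0.le hα.le hf measurable_const hσm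
    have e1 : ∀ x, ∫⁻ y, pgG p α f x y = ∫⁻ y in A, (pgG p α f x y + pgG p α f x (σ y)) :=
      fun x => split _ (hinner1 x)
    have hunc : Measurable (fun q : EuclideanSpace ℝ (Fin N) × EuclideanSpace ℝ (Fin N) =>
        pgG p α f q.1 q.2 + pgG p α f q.1 (σ q.2)) :=
      (pg_meas hp0.le hα.le hf measurable_fst measurable_snd).add
        (pg_meas hp0.le hα.le hf measurable_fst (hσm.comp measurable_snd))
    have hφmeas : Measurable (fun x => ∫⁻ y in A, (pgG p α f x y + pgG p α f x (σ y))) :=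
      Measurable.lintegral_prod_right' hunc
    calc ∫⁻ x, ∫⁻ y, pgG p α f x y
        = ∫⁻ x, ∫⁻ y in A, (pgG p α f x y + pgG p α f x (σ y)) := lintegral_congr e1
    _ = ∫⁻ x in A, ((∫⁻ y in A, (pgG p α f x y + pgG p α f x (σ y)))
          + ∫⁻ y in A, (pgG p α f (σ x) y + pgG p α f (σ x) (σ y))) := split _ hφmeas
    _ = ∫⁻ x in A, ∫⁻ y in A, (pgG p α f x y + pgG p α f x (σ y) +
          (pgG p α f (σ x) y + pgG p α f (σ x) (σ y))) := by
        apply lintegral_congr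
        intro x
        rw [← lintegral_add_left (f := fun y => pgG p α f x y + pgG p α f x (σ y))
          ((hinner1 x).add (hinner2 x))]
  -- rewrite both sides
  have goal_lhs : (∫⁻ x, ∫⁻ y, ENNReal.ofReal (|uH x - uH y| ^ p / ‖x - y‖ ^ α))
      = ∫⁻ x, ∫⁻ y, pgG p α uH x y := rfl
  have goal_rhs : (∫⁻ x, ∫⁻ y, ENNReal.ofReal (|u x - u y| ^ p / ‖x - y‖ ^ α))
      = ∫⁻ x, ∫⁻ y, pgG p α u x y := rfl
  rw [goal_lhs, goal_rhs, key uH huH_meas, key u humeas]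
  -- pointwise comparison on A × A
  have hm4 : Measurable (fun q : EuclideanSpace ℝ (Fin N) × EuclideanSpace ℝ (Fin N) =>
      pgG p α u q.1 q.2 + pgG p α u q.1 (σ q.2) +
        (pgG p α u (σ q.1) q.2 + pgG p α u (σ q.1) (σ q.2))) :=
    ((pg_meas hp0.le hα.le humeas measurable_fst measurable_snd).add
        (pg_meas hp0.le hα.le humeas measurable_fst (hσm.comp measurable_snd))).add
      ((pg_meas hp0.le hα.le humeas (hσm.comp measurable_fst) measurable_snd).add
        (pg_meas hp0.le hα.le humeas (hσm.comp measurable_fst) (hσm.comp measurable_snd)))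
  apply setLIntegral_mono (Measurable.lintegral_prod_right' hm4)
  intro x hx
  have hym : Measurable (fun y => pgG p α u x y + pgG p α u x (σ y) +
      (pgG p α u (σ x) y + pgG p α u (σ x) (σ y))) :=
    ((pg_meas hp0.le hα.le humeas measurable_const measurable_id).add
        (pg_meas hp0.le hα.le humeas measurable_const hσm)).add
      ((pg_meas hp0.le hα.le humeas measurable_const measurable_id).add
        (pg_meas hp0.le hα.le humeas measurable_const hσm))
  apply setLIntegral_mono hym
  intro y hy
  have hax : 0 < d x := hx
  have hay : 0 < d y := hy
  simp only [pgG]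
  rw [hiso x y, hσxy x y, huH_max x hax, huH_max y hay, huH_min x hax, huH_min y hay]
  rcases eq_or_ne x y with rfl | hne
  · -- diagonal terms
    simp only [sub_self, abs_zero, Real.zero_rpow hp0.ne', zero_div, ENNReal.ofReal_zero,
      zero_add, add_zero, max_sub_min_eq_abs, abs_abs,
      abs_sub_comm (min (u x) (u (σ x))) (max (u x) (u (σ x))),
      abs_sub_comm (u (σ x)) (u x)]
    exact le_refl _
  · have hr1 : 0 < ‖x - y‖ := by
      rw [norm_pos_iff]; exact sub_ne_zero_of_ne hne
    have hr2 : 0 < ‖x - σ y‖ := by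
      nlinarith [norm_nonneg (x - σ y), hsq x y, mul_pos hax hay]
    have hr12 : ‖x - y‖ ≤ ‖x - σ y‖ := by
      nlinarith [hsq x y, mul_pos hax hay, norm_nonneg (x - σ y), norm_nonneg (x - y)]
    have h1pos : (0:ℝ) < ‖x - y‖ ^ α := Real.rpow_pos_of_pos hr1 α
    have h2pos : (0:ℝ) < ‖x - σ y‖ ^ α := Real.rpow_pos_of_pos hr2 α
    have hle : ‖x - y‖ ^ α ≤ ‖x - σ y‖ ^ α := Real.rpow_le_rpow hr1.le hr12 hα.le
    have habs1 : ∀ t : ℝ, 0 ≤ |t| ^ p / ‖x - y‖ ^ α := fun t => by positivity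
    have habs2 : ∀ t : ℝ, 0 ≤ |t| ^ p / ‖x - σ y‖ ^ α := fun t => by positivity
    rw [← ENNReal.ofReal_add (habs1 _) (habs2 _), ← ENNReal.ofReal_add (habs2 _) (habs1 _),
      ← ENNReal.ofReal_add (by positivity) (by positivity),
      ← ENNReal.ofReal_add (habs1 _) (habs2 _), ← ENNReal.ofReal_add (habs2 _) (habs1 _),
      ← ENNReal.ofReal_add (by positivity) (by positivity)]
    apply ENNReal.ofReal_le_ofReal
    simp only [div_eq_mul_inv]
    exact pg_two_point hp (u x) (u (σ x)) (u y) (u (σ y)) _ _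
      (inv_nonneg.2 h2pos.le) (inv_anti₀ h1pos hle)
end

section
/- Let N = 1, p ≥ 1, and δ, ε > 0 sufficiently small. Define u : ℝ → ℝ by u = δ on (−2,−1], linear on [−1,−1+δ], u = −2εδ on [−1+δ, 0), u = −εδ on (0,1), u = δ − εδ on (1,2), and u = 0 elsewhere. Let H = [0,∞) and u^H the polarization with respect to the reflection x ↦ −x. Then I_δ(u^H) > I_δ(u), where I_δ(v) = ∫∫_{{|v(y)−v(x)|>δ}} δ^p |x−y|^{−1−p} dx dy. In particular, polarization can strictly increase I_δ. -/
open MeasureTheory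
open scoped ENNReal

/-- The nonlocal energy `I_δ` in dimension one. -/
noncomputable def Idel (p δ : ℝ) (v : ℝ → ℝ) : ℝ≥0∞ :=
  ∫⁻ x : ℝ, ∫⁻ y : ℝ, if δ < |v x - v y| then ENNReal.ofReal (δ ^ p / |x - y| ^ (1 + p)) else 0

/-- The counterexample function of the paper, depending on parameters `δ, ε`. -/
noncomputable def uEx (δ ε : ℝ) : ℝ → ℝ := fun x =>
  if -2 < x ∧ x ≤ -1 then δ
  else if -1 < x ∧ x < -1 + δ then δ + ((x + 1) / δ) * (-2 * ε * δ - δ)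
  else if -1 + δ ≤ x ∧ x < 0 then -2 * ε * δ
  else if 0 < x ∧ x < 1 then -ε * δ
  else if 1 < x ∧ x < 2 then δ - ε * δ
  else 0

/-- Polarization with respect to `H = [0, ∞)` and the reflection `x ↦ -x`. -/
noncomputable def polar1d (v : ℝ → ℝ) : ℝ → ℝ := fun x =>
  if 0 ≤ x then max (v x) (v (-x)) else min (v x) (v (-x))

namespace IdelPolar

open Set Real
open scoped Classical

/-- The kernel of the energy. -/
noncomputable def ker (p δ : ℝ) (x y : ℝ) : ℝ≥0∞ :=
  ENNReal.ofReal (δ ^ p / |x - y| ^ (1 + p))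

lemma ker_symm (p δ x y : ℝ) : ker p δ x y = ker p δ y x := by
  rw [ker, ker, abs_sub_comm]

lemma measurable_ker (p δ : ℝ) (hp : 1 ≤ p) :
    Measurable (fun z : ℝ × ℝ => ker p δ z.1 z.2) := by
  apply Measurable.ennreal_ofReal
  apply Measurable.div measurable_const
  exact (Real.continuous_rpow_const (by linarith)).measurable.comp
    (measurable_fst.sub measurable_snd).abs

lemma ker_le {p δ : ℝ} (hδ : 0 < δ) (hp : 1 ≤ p) {x y r : ℝ} (hr : 0 < r)
    (h : r ≤ |x - y|) :
    ker p δ x y ≤ ENNReal.ofReal (δ ^ p / r ^ (1 + p)) := by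
  apply ENNReal.ofReal_le_ofReal
  exact div_le_div_of_nonneg_left (Real.rpow_nonneg hδ.le p) (Real.rpow_pos_of_pos hr _)
    (Real.rpow_le_rpow hr.le h (by linarith))

lemma ker_ge {p δ : ℝ} (hδ : 0 < δ) (hp : 1 ≤ p) {x y R : ℝ} (h0 : 0 < |x - y|)
    (h : |x - y| ≤ R) :
    ENNReal.ofReal (δ ^ p / R ^ (1 + p)) ≤ ker p δ x y := by
  apply ENNReal.ofReal_le_ofReal
  exact div_le_div_of_nonneg_left (Real.rpow_nonneg hδ.le p) (Real.rpow_pos_of_pos h0 _)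
    (Real.rpow_le_rpow (abs_nonneg _) h (by linarith))

/-! ### Generic integral helpers -/

lemma lint_if_const {s : Set ℝ} (hs : MeasurableSet s) (c : ℝ≥0∞) :
    ∫⁻ x, (if x ∈ s then c else 0) = c * volume s := by
  have h : (fun x => if x ∈ s then c else 0) = s.indicator fun _ => c := by
    funext x; simp [Set.indicator_apply]
  rw [h, lintegral_indicator_const hs]

lemma iint_le_of_le {s t : Set ℝ} (hs : MeasurableSet s) (ht : MeasurableSet t)
    (F : ℝ → ℝ → ℝ≥0∞) (C : ℝ≥0∞)
    (hF : ∀ x y, F x y ≠ 0 → x ∈ s ∧ y ∈ t ∧ F x y ≤ C) :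
    ∫⁻ x, ∫⁻ y, F x y ≤ C * volume t * volume s := by
  have hpt : ∀ x y, F x y ≤ (if x ∈ s then (if y ∈ t then C else 0) else 0) := by
    intro x y
    by_cases h0 : F x y = 0
    · rw [h0]; exact zero_le
    · obtain ⟨h1, h2, h3⟩ := hF x y h0
      rw [if_pos h1, if_pos h2]; exact h3
  calc ∫⁻ x, ∫⁻ y, F x y
      ≤ ∫⁻ x, ∫⁻ y, (if x ∈ s then (if y ∈ t then C else 0) else 0) :=
        lintegral_mono fun x => lintegral_mono fun y => hpt x y
    _ = ∫⁻ x, (if x ∈ s then C * volume t else 0) := by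
        apply lintegral_congr fun x => ?_
        by_cases hx : x ∈ s
        · simp only [if_pos hx]; exact lint_if_const ht C
        · simp [hx]
    _ = C * volume t * volume s := lint_if_const hs _

lemma iint_ge_of_ge {s t : Set ℝ} (hs : MeasurableSet s) (ht : MeasurableSet t)
    (F : ℝ → ℝ → ℝ≥0∞) (C : ℝ≥0∞)
    (hF : ∀ x ∈ s, ∀ y ∈ t, C ≤ F x y) :
    C * volume t * volume s ≤ ∫⁻ x, ∫⁻ y, F x y := by
  have hpt : ∀ x y, (if x ∈ s then (if y ∈ t then C else 0) else 0) ≤ F x y := by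
    intro x y
    by_cases hx : x ∈ s
    · by_cases hy : y ∈ t
      · rw [if_pos hx, if_pos hy]; exact hF x hx y hy
      · simp [hy]
    · simp [hx]
  calc C * volume t * volume s
      = ∫⁻ x, (if x ∈ s then C * volume t else 0) := (lint_if_const hs _).symm
    _ = ∫⁻ x, ∫⁻ y, (if x ∈ s then (if y ∈ t then C else 0) else 0) := by
        apply lintegral_congr fun x => ?_
        by_cases hx : x ∈ s
        · simp only [if_pos hx]; exact (lint_if_const ht C).symm
        · simp [hx]
    _ ≤ ∫⁻ x, ∫⁻ y, F x y :=
        lintegral_mono fun x => lintegral_mono fun y => hpt x y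

lemma lint_if_Ioo_eq (a b : ℝ) (hab : a ≤ b) (f : ℝ → ℝ)
    (hf : ContinuousOn f (Icc a b)) (hnn : ∀ y ∈ Ioo a b, 0 ≤ f y) :
    ∫⁻ y, (if y ∈ Ioo a b then ENNReal.ofReal (f y) else 0)
      = ENNReal.ofReal (∫ y in a..b, f y) := by
  have h : (fun y => if y ∈ Ioo a b then ENNReal.ofReal (f y) else 0)
      = (Ioo a b).indicator fun y => ENNReal.ofReal (f y) := by
    funext y; simp [Set.indicator_apply]
  rw [h, lintegral_indicator measurableSet_Ioo,
    intervalIntegral.integral_of_le hab, integral_Ioc_eq_integral_Ioo,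
    ofReal_integral_eq_lintegral_ofReal]
  · exact (hf.integrableOn_Icc).mono_set Ioo_subset_Icc_self
  · exact (ae_restrict_iff' measurableSet_Ioo).2 (ae_of_all _ hnn)

lemma iint_add4 (f1 f2 f3 f4 : ℝ → ℝ → ℝ≥0∞)
    (h1 : Measurable (Function.uncurry f1)) (h2 : Measurable (Function.uncurry f2))
    (h3 : Measurable (Function.uncurry f3)) (h4 : Measurable (Function.uncurry f4)) :
    ∫⁻ x, ∫⁻ y, (f1 x y + f2 x y + f3 x y + f4 x y) =
      (∫⁻ x, ∫⁻ y, f1 x y) + (∫⁻ x, ∫⁻ y, f2 x y) + (∫⁻ x, ∫⁻ y, f3 x y)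
        + (∫⁻ x, ∫⁻ y, f4 x y) := by
  have e : ∀ x, ∫⁻ y, (f1 x y + f2 x y + f3 x y + f4 x y)
      = (∫⁻ y, f1 x y) + (∫⁻ y, f2 x y) + (∫⁻ y, f3 x y) + (∫⁻ y, f4 x y) := by
    intro x
    have m1 : Measurable fun y => f1 x y := h1.comp measurable_prodMk_left
    have m2 : Measurable fun y => f2 x y := h2.comp measurable_prodMk_left
    have m3 : Measurable fun y => f3 x y := h3.comp measurable_prodMk_left
    rw [lintegral_add_left ((by exact (m1.add m2).add m3 :
        Measurable fun y => f1 x y + f2 x y + f3 x y)),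
      lintegral_add_left ((by exact m1.add m2 : Measurable fun y => f1 x y + f2 x y)),
      lintegral_add_left m1]
  simp only [e]
  have g1 : Measurable fun x => ∫⁻ y, f1 x y := h1.lintegral_prod_right'
  have g2 : Measurable fun x => ∫⁻ y, f2 x y := h2.lintegral_prod_right'
  have g3 : Measurable fun x => ∫⁻ y, f3 x y := h3.lintegral_prod_right'
  rw [lintegral_add_left ((by exact (g1.add g2).add g3 : Measurable fun x =>
        (∫⁻ y, f1 x y) + (∫⁻ y, f2 x y) + (∫⁻ y, f3 x y))),
    lintegral_add_left ((by exact g1.add g2 : Measurable fun x => (∫⁻ y, f1 x y) + (∫⁻ y, f2 x y))),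
    lintegral_add_left g1]

/-- Tail bound for the kernel integral away from the singularity. -/
lemma tail_bound (p δ r : ℝ) (hp : 1 ≤ p) (hδ : 0 < δ) (hr : 0 < r) (c : ℝ) :
    ∫⁻ z : ℝ, (if r ≤ |z - c| then ENNReal.ofReal (δ ^ p / |z - c| ^ (1 + p)) else 0)
      ≤ ENNReal.ofReal (2 * (δ ^ p / (p * r ^ p))) := by
  have hp0 : 0 < p := by linarith
  set g : ℝ → ℝ≥0∞ := fun t => if r ≤ |t| then ENNReal.ofReal (δ ^ p / |t| ^ (1 + p)) else 0
    with hg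
  have htr : ∫⁻ z : ℝ, g (z - c) = ∫⁻ t, g t := by
    simpa [sub_eq_add_neg] using lintegral_add_right_eq_self g (-c)
  have hIplus : ∫⁻ t, (Ici r).indicator
      (fun t => ENNReal.ofReal (δ ^ p / |t| ^ (1 + p))) t
      = ENNReal.ofReal (δ ^ p / (p * r ^ p)) := by
    rw [lintegral_indicator measurableSet_Ici]
    have hcongr : ∫⁻ t in Ici r, ENNReal.ofReal (δ ^ p / |t| ^ (1 + p))
        = ∫⁻ t in Ici r, ENNReal.ofReal (δ ^ p * t ^ (-(1 + p))) := by
      apply setLIntegral_congr_fun measurableSet_Ici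
      intro t ht
      have ht0 : 0 < t := lt_of_lt_of_le hr ht
      dsimp only
      rw [abs_of_pos ht0, Real.rpow_neg ht0.le, div_eq_mul_inv]
    rw [hcongr]
    have hint : IntegrableOn (fun t : ℝ => δ ^ p * t ^ (-(1 + p))) (Ici r) := by
      rw [integrableOn_Ici_iff_integrableOn_Ioi]
      exact (integrableOn_Ioi_rpow_of_lt (by linarith) hr).const_mul _
    have hnn : 0 ≤ᵐ[volume.restrict (Ici r)] fun t : ℝ => δ ^ p * t ^ (-(1 + p)) := by
      refine (ae_restrict_iff' measurableSet_Ici).2 (ae_of_all _ fun t ht => ?_)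
      exact mul_nonneg (Real.rpow_nonneg hδ.le _)
        (Real.rpow_nonneg (le_trans hr.le ht) _)
    rw [← ofReal_integral_eq_lintegral_ofReal hint hnn]
    congr 1
    rw [MeasureTheory.integral_Ici_eq_integral_Ioi, integral_const_mul,
      integral_Ioi_rpow_of_lt (by linarith) hr]
    have h1 : -(1 + p) + 1 = -p := by ring
    rw [h1]
    rw [Real.rpow_neg hr.le]
    field_simp
  have hneg : ∫⁻ t, (Iic (-r)).indicator
      (fun t => ENNReal.ofReal (δ ^ p / |t| ^ (1 + p))) t
      = ENNReal.ofReal (δ ^ p / (p * r ^ p)) := by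
    have hfun : (fun t : ℝ => (Iic (-r)).indicator
        (fun t => ENNReal.ofReal (δ ^ p / |t| ^ (1 + p))) t)
        = fun t : ℝ => (Ici r).indicator
        (fun t => ENNReal.ofReal (δ ^ p / |t| ^ (1 + p))) (-t) := by
      funext t
      simp only [Set.indicator_apply, mem_Iic, mem_Ici, abs_neg]
      congr 1
      simp [le_neg]
    rw [hfun, ← hIplus]
    exact (Measure.measurePreserving_neg volume).lintegral_comp_emb
      (MeasurableEquiv.neg ℝ).measurableEmbedding _
  have hsplit : ∀ t : ℝ, g t ≤ (Ici r).indicator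
      (fun t => ENNReal.ofReal (δ ^ p / |t| ^ (1 + p))) t
      + (Iic (-r)).indicator (fun t => ENNReal.ofReal (δ ^ p / |t| ^ (1 + p))) t := by
    intro t
    by_cases h : r ≤ |t|
    · show (if r ≤ |t| then ENNReal.ofReal (δ ^ p / |t| ^ (1 + p)) else 0) ≤ _
      rw [if_pos h]
      rcases le_abs.mp h with h1 | h1
      · rw [Set.indicator_of_mem (show t ∈ Ici r from h1)]
        exact le_add_right le_rfl
      · rw [Set.indicator_of_mem (show t ∈ Iic (-r) from by simp only [mem_Iic]; linarith)]
        exact le_add_left le_rfl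
    · show (if r ≤ |t| then ENNReal.ofReal (δ ^ p / |t| ^ (1 + p)) else 0) ≤ _
      rw [if_neg h]; exact zero_le
  have hmeas : Measurable fun t : ℝ => (Ici r).indicator
      (fun t => ENNReal.ofReal (δ ^ p / |t| ^ (1 + p))) t := by
    apply Measurable.indicator _ measurableSet_Ici
    apply Measurable.ennreal_ofReal
    exact Measurable.div measurable_const
      ((Real.continuous_rpow_const (by linarith)).measurable.comp measurable_abs)
  calc ∫⁻ z : ℝ, (if r ≤ |z - c| then ENNReal.ofReal (δ ^ p / |z - c| ^ (1 + p)) else 0)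
      = ∫⁻ t, g t := htr
    _ ≤ ∫⁻ t, ((Ici r).indicator (fun t => ENNReal.ofReal (δ ^ p / |t| ^ (1 + p))) t
        + (Iic (-r)).indicator (fun t => ENNReal.ofReal (δ ^ p / |t| ^ (1 + p))) t) :=
        lintegral_mono hsplit
    _ = ENNReal.ofReal (δ ^ p / (p * r ^ p)) + ENNReal.ofReal (δ ^ p / (p * r ^ p)) := by
        rw [lintegral_add_left hmeas, hIplus, hneg]
    _ = ENNReal.ofReal (2 * (δ ^ p / (p * r ^ p))) := by
        rw [← ENNReal.ofReal_add (by positivity) (by positivity)]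
        congr 1; ring

/-! ### Values of `uEx` -/

variable {p δ ε : ℝ}

lemma uEx_A {x : ℝ} (hx1 : -2 < x) (hx2 : x ≤ -1) : uEx δ ε x = δ := by
  unfold uEx; rw [if_pos ⟨hx1, hx2⟩]

lemma uEx_L (hδ : 0 < δ) {x : ℝ} (hx1 : -1 < x) (hx2 : x < -1 + δ) :
    uEx δ ε x = δ - (x + 1) * (1 + 2 * ε) := by
  unfold uEx
  rw [if_neg (by rintro ⟨_, h⟩; linarith), if_pos ⟨hx1, hx2⟩]
  field_simp
  ring

lemma uEx_B (hδ : 0 < δ) {x : ℝ} (hx1 : -1 + δ ≤ x) (hx2 : x < 0) :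
    uEx δ ε x = -2 * ε * δ := by
  unfold uEx
  rw [if_neg (by rintro ⟨_, h⟩; linarith), if_neg (by rintro ⟨_, h⟩; linarith),
    if_pos ⟨hx1, hx2⟩]

lemma uEx_C (hδ : 0 < δ) (hδ1 : δ < 1) {x : ℝ} (hx1 : 0 < x) (hx2 : x < 1) :
    uEx δ ε x = -ε * δ := by
  unfold uEx
  rw [if_neg (by rintro ⟨_, h⟩; linarith), if_neg (by rintro ⟨_, h⟩; linarith),
    if_neg (by rintro ⟨_, h⟩; linarith), if_pos ⟨hx1, hx2⟩]

lemma uEx_D (hδ : 0 < δ) (hδ1 : δ < 1) {x : ℝ} (hx1 : 1 < x) (hx2 : x < 2) :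
    uEx δ ε x = δ - ε * δ := by
  unfold uEx
  rw [if_neg (by rintro ⟨_, h⟩; linarith), if_neg (by rintro ⟨_, h⟩; linarith),
    if_neg (by rintro ⟨_, h⟩; linarith), if_neg (by rintro ⟨_, h⟩; linarith),
    if_pos ⟨hx1, hx2⟩]

lemma uEx_val (hδ : 0 < δ) (x : ℝ) :
    (x ∈ Ioc (-2 : ℝ) (-1) ∧ uEx δ ε x = δ) ∨
    (x ∈ Ioo (-1 : ℝ) (-1 + δ) ∧ uEx δ ε x = δ - (x + 1) * (1 + 2 * ε)) ∨
    (x ∈ Ico (-1 + δ) (0 : ℝ) ∧ uEx δ ε x = -2 * ε * δ) ∨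
    (x ∈ Ioo (0 : ℝ) 1 ∧ uEx δ ε x = -ε * δ) ∨
    (x ∈ Ioo (1 : ℝ) 2 ∧ uEx δ ε x = δ - ε * δ) ∨
    uEx δ ε x = 0 := by
  by_cases h1 : -2 < x ∧ x ≤ -1
  · exact Or.inl ⟨⟨h1.1, h1.2⟩, uEx_A h1.1 h1.2⟩
  by_cases h2 : -1 < x ∧ x < -1 + δ
  · exact Or.inr (Or.inl ⟨⟨h2.1, h2.2⟩, uEx_L hδ h2.1 h2.2⟩)
  by_cases h3 : -1 + δ ≤ x ∧ x < 0
  · exact Or.inr (Or.inr (Or.inl ⟨⟨h3.1, h3.2⟩, uEx_B hδ h3.1 h3.2⟩))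
  by_cases h4 : 0 < x ∧ x < 1
  · refine Or.inr (Or.inr (Or.inr (Or.inl ⟨⟨h4.1, h4.2⟩, ?_⟩)))
    unfold uEx
    rw [if_neg h1, if_neg h2, if_neg h3, if_pos h4]
  by_cases h5 : 1 < x ∧ x < 2
  · refine Or.inr (Or.inr (Or.inr (Or.inr (Or.inl ⟨⟨h5.1, h5.2⟩, ?_⟩))))
    unfold uEx
    rw [if_neg h1, if_neg h2, if_neg h3, if_neg h4, if_pos h5]
  · refine Or.inr (Or.inr (Or.inr (Or.inr (Or.inr ?_))))
    unfold uEx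
    rw [if_neg h1, if_neg h2, if_neg h3, if_neg h4, if_neg h5]

lemma uEx_abs_le (hδ : 0 < δ) (hε : 0 < ε) (hε2 : ε ≤ 1/2) (x : ℝ) :
    |uEx δ ε x| ≤ δ := by
  rcases uEx_val (ε := ε) hδ x with ⟨hx, hv⟩ | ⟨hx, hv⟩ | ⟨hx, hv⟩ | ⟨hx, hv⟩ | ⟨hx, hv⟩ | hv <;>
    rw [hv] <;> rw [abs_le]
  · constructor <;> linarith
  · obtain ⟨hx1, hx2⟩ := hx
    constructor <;> nlinarith
  · constructor <;> nlinarith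
  · constructor <;> nlinarith
  · constructor <;> nlinarith
  · constructor <;> linarith

/-- The union of the two small "sliver" intervals around `-1` and `-1 + δ`. -/
def Wset (δ ε : ℝ) : Set ℝ :=
  Ioo (-1) (-1 + 2 * ε * δ) ∪ Ioo (-1 + δ - 2 * ε * δ) (-1 + δ)

lemma Wset_measurable : MeasurableSet (Wset δ ε) :=
  measurableSet_Ioo.union measurableSet_Ioo

lemma Wset_volume (hδ : 0 < δ) (hε : 0 < ε) :
    volume (Wset δ ε) ≤ ENNReal.ofReal (4 * ε * δ) := by
  calc volume (Wset δ ε) ≤ volume (Ioo (-1 : ℝ) (-1 + 2 * ε * δ))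
      + volume (Ioo (-1 + δ - 2 * ε * δ) (-1 + δ)) := measure_union_le _ _
    _ = ENNReal.ofReal (2 * ε * δ) + ENNReal.ofReal (2 * ε * δ) := by
        rw [Real.volume_Ioo, Real.volume_Ioo]; norm_num
    _ = ENNReal.ofReal (4 * ε * δ) := by
        rw [← ENNReal.ofReal_add (by positivity) (by positivity)]; congr 1; ring

set_option maxHeartbeats 2000000 in
/-- Structure of the exceedance set of `uEx`. -/
lemma exc_sub (hδ : 0 < δ) (hδ8 : δ < 1/8) (hε : 0 < ε) (hε8 : ε < 1/8)
    {x y : ℝ} (h : δ < |uEx δ ε x - uEx δ ε y|) :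
    (x ∈ Ioc (-2 : ℝ) (-1) ∧ y ∈ Ico (-1 + δ) (0 : ℝ)) ∨
    (x ∈ Ico (-1 + δ) (0 : ℝ) ∧ y ∈ Ioc (-2 : ℝ) (-1)) ∨
    ((x ∈ Wset δ ε ∨ y ∈ Wset δ ε) ∧ δ/4 ≤ |x - y|) ∨
    (x ∈ Ioo (-2 : ℝ) 2 ∧ y ∈ Ioo (-2 : ℝ) 2 ∧ 1/2 ≤ |x - y|) := by
  have hb := uEx_abs_le (ε := ε) hδ hε (by linarith)
  have habs : ∀ a b : ℝ, a - b ≤ |a - b| ∧ b - a ≤ |a - b| := by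
    intro a b
    constructor
    · exact le_abs_self _
    · rw [abs_sub_comm]; exact le_abs_self _
  rcases uEx_val (ε := ε) hδ x with ⟨hx, hvx⟩ | ⟨hx, hvx⟩ | ⟨hx, hvx⟩ | ⟨hx, hvx⟩ |
    ⟨hx, hvx⟩ | hvx
  pick_goal 6
  · exfalso; rw [hvx, zero_sub, abs_neg] at h; linarith [hb y]
  all_goals (
    rcases uEx_val (ε := ε) hδ y with ⟨hy, hvy⟩ | ⟨hy, hvy⟩ | ⟨hy, hvy⟩ | ⟨hy, hvy⟩ |
      ⟨hy, hvy⟩ | hvy)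
  pick_goal 6
  · exfalso; rw [hvy, sub_zero] at h; linarith [hb x]
  pick_goal 11
  · exfalso; rw [hvy, sub_zero] at h; linarith [hb x]
  pick_goal 16
  · exfalso; rw [hvy, sub_zero] at h; linarith [hb x]
  pick_goal 21
  · exfalso; rw [hvy, sub_zero] at h; linarith [hb x]
  pick_goal 26
  · exfalso; rw [hvy, sub_zero] at h; linarith [hb x]
  all_goals simp only [mem_Ioc, mem_Ico, mem_Ioo] at hx hy
  all_goals obtain ⟨hx1, hx2⟩ := hx
  all_goals obtain ⟨hy1, hy2⟩ := hy
  all_goals rw [hvx, hvy] at h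
  all_goals by_cases hfar : 1/2 ≤ |x - y|
  all_goals (try (
    refine Or.inr (Or.inr (Or.inr ⟨?_, ?_, hfar⟩)) <;> simp only [mem_Ioo] <;>
      constructor <;> linarith))
  all_goals have hd1 := (abs_lt.mp (not_le.mp hfar)).1
  all_goals have hd2 := (abs_lt.mp (not_le.mp hfar)).2
  -- now the 25 near cases, in order (x-region, y-region) with regions A L B C D
  -- (A,A)
  · exfalso; rw [sub_self, abs_zero] at h; linarith
  -- (A,L)
  · rcases lt_abs.mp h with h' | h'
    · have key : δ - 2 * ε * δ < y + 1 := by nlinarith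
      have hdist : δ/4 ≤ y - x := by nlinarith
      refine Or.inr (Or.inr (Or.inl ⟨Or.inr ?_, le_trans hdist (habs x y).2⟩))
      exact Set.mem_union_right _ (by simp only [mem_Ioo]; constructor <;> linarith)
    · exfalso; nlinarith
  -- (A,B)
  · exact Or.inl ⟨⟨hx1, hx2⟩, hy1, hy2⟩
  -- (A,C)
  · exfalso; linarith
  -- (A,D)
  · exfalso; linarith
  -- (L,A)
  · rcases lt_abs.mp h with h' | h'
    · exfalso; nlinarith
    · have key : δ - 2 * ε * δ < x + 1 := by nlinarith
      have hdist : δ/4 ≤ x - y := by nlinarith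
      refine Or.inr (Or.inr (Or.inl ⟨Or.inl ?_, le_trans hdist (habs x y).1⟩))
      exact Set.mem_union_right _ (by simp only [mem_Ioo]; constructor <;> linarith)
  -- (L,L)
  · rcases lt_abs.mp h with h' | h'
    · -- δ < (y - x)(1+2ε), so y > x
      have key : δ - 2 * ε * δ < y - x := by nlinarith
      have hxW : x + 1 < 2 * ε * δ := by nlinarith
      refine Or.inr (Or.inr (Or.inl ⟨Or.inl (Set.mem_union_left _ ?_), ?_⟩))
      · simp only [mem_Ioo]; constructor <;> linarith
      · refine le_trans ?_ (habs x y).2; nlinarith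
    · have key : δ - 2 * ε * δ < x - y := by nlinarith
      have hyW : y + 1 < 2 * ε * δ := by nlinarith
      refine Or.inr (Or.inr (Or.inl ⟨Or.inr (Set.mem_union_left _ ?_), ?_⟩))
      · simp only [mem_Ioo]; constructor <;> linarith
      · refine le_trans ?_ (habs x y).1; nlinarith
  -- (L,B)
  · rcases lt_abs.mp h with h' | h'
    · have hxW : x + 1 < 2 * ε * δ := by nlinarith
      refine Or.inr (Or.inr (Or.inl ⟨Or.inl (Set.mem_union_left _ ?_), ?_⟩))
      · simp only [mem_Ioo]; constructor <;> linarith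
      · refine le_trans ?_ (habs x y).2; nlinarith
    · exfalso; nlinarith
  -- (L,C)
  · exfalso; linarith
  -- (L,D)
  · exfalso; linarith
  -- (B,A)
  · exact Or.inr (Or.inl ⟨⟨hx1, hx2⟩, hy1, hy2⟩)
  -- (B,L)
  · rcases lt_abs.mp h with h' | h'
    · exfalso; nlinarith
    · have hyW : y + 1 < 2 * ε * δ := by nlinarith
      refine Or.inr (Or.inr (Or.inl ⟨Or.inr (Set.mem_union_left _ ?_), ?_⟩))
      · simp only [mem_Ioo]; constructor <;> linarith
      · refine le_trans ?_ (habs x y).1; nlinarith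
  -- (B,B)
  · exfalso; rw [sub_self, abs_zero] at h; linarith
  -- (B,C)
  · exfalso; rcases lt_abs.mp h with h' | h' <;> nlinarith
  -- (B,D)
  · exfalso; linarith
  -- (C,A)
  · exfalso; linarith
  -- (C,L)
  · exfalso; linarith
  -- (C,B)
  · exfalso; rcases lt_abs.mp h with h' | h' <;> nlinarith
  -- (C,C)
  · exfalso; rw [sub_self, abs_zero] at h; linarith
  -- (C,D)
  · exfalso; rcases lt_abs.mp h with h' | h' <;> nlinarith
  -- (D,A)
  · exfalso; rcases lt_abs.mp h with h' | h' <;> nlinarith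
  -- (D,L)
  · exfalso; linarith
  -- (D,B)
  · exfalso; linarith
  -- (D,C)
  · exfalso; rcases lt_abs.mp h with h' | h' <;> nlinarith
  -- (D,D)
  · exfalso; rw [sub_self, abs_zero] at h; linarith

/-! ### Values of the polarized function -/

lemma polar_negOuter (hδ : 0 < δ) (hδ1 : δ < 1) (hε : 0 < ε) {x : ℝ}
    (hx : x ∈ Ioo (-2 : ℝ) (-1)) : polar1d (uEx δ ε) x = δ - ε * δ := by
  simp only [mem_Ioo] at hx
  unfold polar1d
  rw [if_neg (by push_neg; linarith)]
  rw [uEx_A hx.1 hx.2.le, uEx_D hδ hδ1 (by linarith) (by linarith)]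
  have : δ - ε * δ ≤ δ := by nlinarith
  exact min_eq_right this

lemma polar_B (hδ : 0 < δ) (hδ1 : δ < 1) (hε : 0 < ε) {x : ℝ}
    (hx : x ∈ Ico (-1 + δ) (0 : ℝ)) : polar1d (uEx δ ε) x = -2 * ε * δ := by
  simp only [mem_Ico] at hx
  unfold polar1d
  rw [if_neg (by push_neg; linarith [hx.2])]
  rw [uEx_B hδ hx.1 hx.2, uEx_C hδ hδ1 (by linarith [hx.2]) (by linarith [hx.1])]
  exact min_eq_left (by nlinarith)

lemma polar_D (hδ : 0 < δ) (hδ1 : δ < 1) (hε : 0 < ε) {x : ℝ}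
    (hx : x ∈ Ioo (1 : ℝ) 2) : polar1d (uEx δ ε) x = δ := by
  simp only [mem_Ioo] at hx
  unfold polar1d
  rw [if_pos (by linarith [hx.1])]
  rw [uEx_D hδ hδ1 hx.1 hx.2, uEx_A (by linarith [hx.2]) (by linarith [hx.1])]
  exact max_eq_right (by nlinarith)

lemma polar_C (hδ : 0 < δ) (hδ1 : δ < 1) (hε : 0 < ε) {x : ℝ}
    (hx : x ∈ Ioo (0 : ℝ) (1 - δ)) : polar1d (uEx δ ε) x = -ε * δ := by
  simp only [mem_Ioo] at hx
  unfold polar1d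
  rw [if_pos (by linarith [hx.1])]
  rw [uEx_C hδ hδ1 hx.1 (by linarith [hx.2]), uEx_B hδ (by linarith [hx.2])
    (by linarith [hx.1])]
  exact max_eq_left (by nlinarith)

lemma excH_R1 (hδ : 0 < δ) (hδ1 : δ < 1) (hε : 0 < ε) {x y : ℝ}
    (hx : x ∈ Ioo (-2 : ℝ) (-1)) (hy : y ∈ Ico (-1 + δ) (0 : ℝ)) :
    δ < |polar1d (uEx δ ε) x - polar1d (uEx δ ε) y| := by
  rw [polar_negOuter hδ hδ1 hε hx, polar_B hδ hδ1 hε hy]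
  have : δ - ε * δ - -2 * ε * δ = δ + ε * δ := by ring
  rw [this, abs_of_pos (by nlinarith)]
  nlinarith

lemma excH_R3 (hδ : 0 < δ) (hδ1 : δ < 1) (hε : 0 < ε) {x y : ℝ}
    (hx : x ∈ Ioo (1 : ℝ) 2) (hy : y ∈ Ioo (0 : ℝ) (1 - δ)) :
    δ < |polar1d (uEx δ ε) x - polar1d (uEx δ ε) y| := by
  rw [polar_D hδ hδ1 hε hx, polar_C hδ hδ1 hε hy]
  have : δ - -ε * δ = δ + ε * δ := by ring
  rw [this, abs_of_pos (by nlinarith)]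
  nlinarith

end IdelPolar

open IdelPolar Set Real
open scoped Classical

set_option maxHeartbeats 4000000 in
/-- For `p ≥ 1` and `δ, ε > 0` sufficiently small, the polarization of the
counterexample function strictly increases `I_δ`. -/
theorem Idel_increases_under_polarization (p : ℝ) (hp : 1 ≤ p) :
    ∃ δ₀ > (0 : ℝ), ∃ ε₀ > (0 : ℝ), ∀ δ ε : ℝ, 0 < δ → δ < δ₀ → 0 < ε → ε < ε₀ →
      Idel p δ (uEx δ ε) < Idel p δ (polar1d (uEx δ ε)) := by
  have hp0 : 0 < p := by linarith
  refine ⟨min (1/8) (Real.exp (-(16 * 2 ^ (1 + p) + 2))), by positivity,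
    min (1/8) (p / (32 * 4 ^ p * 3 ^ (1 + p))), by positivity, ?_⟩
  intro δ ε hδ hδ0 hε hε0
  have hδ8 : δ < 1/8 := lt_of_lt_of_le hδ0 (min_le_left _ _)
  have hε8 : ε < 1/8 := lt_of_lt_of_le hε0 (min_le_left _ _)
  have hδ1 : δ < 1 := by linarith
  have hlog : 16 * 2 ^ (1 + p) + 2 < Real.log δ⁻¹ := by
    have h1 : δ < Real.exp (-(16 * 2 ^ (1 + p) + 2)) :=
      lt_of_lt_of_le hδ0 (min_le_right _ _)
    have h2 : Real.log δ < -(16 * 2 ^ (1 + p) + 2) := by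
      calc Real.log δ < Real.log (Real.exp (-(16 * 2 ^ (1 + p) + 2))) :=
            Real.log_lt_log hδ h1
        _ = -(16 * 2 ^ (1 + p) + 2) := Real.log_exp _
    rw [Real.log_inv]; linarith
  have hεp : ε < p / (32 * 4 ^ p * 3 ^ (1 + p)) :=
    lt_of_lt_of_le hε0 (min_le_right _ _)
  set u := uEx δ ε with hu
  set v := polar1d (uEx δ ε) with hv
  -- the four upper pieces
  set f1 : ℝ → ℝ → ℝ≥0∞ := fun x y =>
    if x ∈ Ioc (-2 : ℝ) (-1) ∧ y ∈ Ico (-1 + δ) (0 : ℝ) then ker p δ x y else 0 with hf1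
  set f2 : ℝ → ℝ → ℝ≥0∞ := fun x y =>
    if x ∈ Ico (-1 + δ) (0 : ℝ) ∧ y ∈ Ioc (-2 : ℝ) (-1) then ker p δ x y else 0 with hf2
  set f3 : ℝ → ℝ → ℝ≥0∞ := fun x y =>
    if (x ∈ Wset δ ε ∨ y ∈ Wset δ ε) ∧ δ/4 ≤ |x - y| then ker p δ x y else 0 with hf3
  set f4 : ℝ → ℝ → ℝ≥0∞ := fun x y =>
    if x ∈ Ioo (-2 : ℝ) 2 ∧ y ∈ Ioo (-2 : ℝ) 2 ∧ 1/2 ≤ |x - y| then ker p δ x y else 0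
    with hf4
  -- the four lower pieces
  set r1 : ℝ → ℝ → ℝ≥0∞ := fun x y =>
    if x ∈ Ioo (-2 : ℝ) (-1) ∧ y ∈ Ico (-1 + δ) (0 : ℝ) then ker p δ x y else 0 with hr1
  set r2 : ℝ → ℝ → ℝ≥0∞ := fun x y =>
    if x ∈ Ico (-1 + δ) (0 : ℝ) ∧ y ∈ Ioo (-2 : ℝ) (-1) then ker p δ x y else 0 with hr2
  set q1 : ℝ → ℝ → ℝ≥0∞ := fun x y =>
    if x ∈ Ioo (1 : ℝ) (1 + δ) ∧ y ∈ Ioo (1 - 2*δ) (1 - δ) then ker p δ x y else 0 with hq1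
  set q2 : ℝ → ℝ → ℝ≥0∞ := fun x y =>
    if x ∈ Ioo (1 : ℝ) (2 - 2*δ) ∧ y ∈ Ioo (x - 1) (1 - 2*δ) then ker p δ x y else 0
    with hq2

  -- measurability facts
  have hkm : Measurable (fun z : ℝ × ℝ => ker p δ z.1 z.2) := measurable_ker p δ hp
  have hWm : MeasurableSet (Wset δ ε) := Wset_measurable
  have mf1 : Measurable (Function.uncurry f1) := by
    rw [hf1]; exact Measurable.ite (measurableSet_Ioc.prod measurableSet_Ico) hkm measurable_const
  have mf2 : Measurable (Function.uncurry f2) := by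
    rw [hf2]; exact Measurable.ite (measurableSet_Ico.prod measurableSet_Ioc) hkm measurable_const
  have mr1 : Measurable (Function.uncurry r1) := by
    rw [hr1]; exact Measurable.ite (measurableSet_Ioo.prod measurableSet_Ico) hkm measurable_const
  have mr2 : Measurable (Function.uncurry r2) := by
    rw [hr2]; exact Measurable.ite (measurableSet_Ico.prod measurableSet_Ioo) hkm measurable_const
  have mq1 : Measurable (Function.uncurry q1) := by
    rw [hq1]; exact Measurable.ite (measurableSet_Ioo.prod measurableSet_Ioo) hkm measurable_const
  have mf3 : Measurable (Function.uncurry f3) := by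
    rw [hf3]
    apply Measurable.ite ?_ hkm measurable_const
    apply MeasurableSet.inter
    · exact (hWm.preimage measurable_fst).union (hWm.preimage measurable_snd)
    · exact measurableSet_le measurable_const (measurable_fst.sub measurable_snd).abs
  have mf4 : Measurable (Function.uncurry f4) := by
    rw [hf4]
    apply Measurable.ite ?_ hkm measurable_const
    apply MeasurableSet.inter
    · exact measurableSet_Ioo.preimage measurable_fst
    apply MeasurableSet.inter
    · exact measurableSet_Ioo.preimage measurable_snd
    · exact measurableSet_le measurable_const (measurable_fst.sub measurable_snd).abs
  have mq2 : Measurable (Function.uncurry q2) := by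
    rw [hq2]
    apply Measurable.ite ?_ hkm measurable_const
    have e : {z : ℝ × ℝ | z.1 ∈ Ioo (1 : ℝ) (2 - 2*δ) ∧ z.2 ∈ Ioo (z.1 - 1) (1 - 2*δ)}
        = ({z : ℝ × ℝ | 1 < z.1} ∩ {z : ℝ × ℝ | z.1 < 2 - 2*δ})
          ∩ ({z : ℝ × ℝ | z.1 - 1 < z.2} ∩ {z : ℝ × ℝ | z.2 < 1 - 2*δ}) := by
      ext z; simp only [mem_Ioo, mem_setOf_eq, mem_inter_iff, and_assoc]
    show MeasurableSet {z : ℝ × ℝ | z.1 ∈ Ioo (1 : ℝ) (2 - 2*δ) ∧ z.2 ∈ Ioo (z.1 - 1) (1 - 2*δ)}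
    rw [e]
    exact ((measurableSet_lt measurable_const measurable_fst).inter
        (measurableSet_lt measurable_fst measurable_const)).inter
      ((measurableSet_lt (measurable_fst.sub measurable_const) measurable_snd).inter
        (measurableSet_lt measurable_snd measurable_const))
  -- pointwise upper bound
  have hpt_up : ∀ x y : ℝ, (if δ < |u x - u y| then ker p δ x y else 0)
      ≤ f1 x y + f2 x y + f3 x y + f4 x y := by
    intro x y
    by_cases hc : δ < |u x - u y|
    · rw [if_pos hc]
      rw [hu] at hc
      rcases exc_sub hδ hδ8 hε hε8 hc with hcase | hcase | hcase | hcase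
      · have e : f1 x y = ker p δ x y := by simp only [hf1]; exact if_pos hcase
        calc ker p δ x y = f1 x y := e.symm
          _ ≤ _ := le_add_right (le_add_right (le_add_right le_rfl))
      · have e : f2 x y = ker p δ x y := by simp only [hf2]; exact if_pos hcase
        calc ker p δ x y = f2 x y := e.symm
          _ ≤ _ := le_add_right (le_add_right (le_add_left le_rfl))
      · have e : f3 x y = ker p δ x y := by simp only [hf3]; exact if_pos hcase
        calc ker p δ x y = f3 x y := e.symm
          _ ≤ _ := le_add_right (le_add_left le_rfl)
      · have e : f4 x y = ker p δ x y := by simp only [hf4]; exact if_pos hcase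
        calc ker p δ x y = f4 x y := e.symm
          _ ≤ _ := le_add_left le_rfl
    · rw [if_neg hc]; exact zero_le
  -- pointwise lower bound
  have hpt_lo : ∀ x y : ℝ, r1 x y + r2 x y + q1 x y + q2 x y
      ≤ (if δ < |v x - v y| then ker p δ x y else 0) := by
    intro x y
    by_cases h1 : x ∈ Ioo (-2 : ℝ) (-1) ∧ y ∈ Ico (-1 + δ) (0 : ℝ)
    · have hv1 : δ < |v x - v y| := by rw [hv]; exact excH_R1 hδ hδ1 hε h1.1 h1.2
      have e2 : r2 x y = 0 := by simp only [hr2]; exact if_neg (by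
        rintro ⟨hx, -⟩
        have h1x := mem_Ioo.mp h1.1
        have hxx := mem_Ico.mp hx
        linarith [h1x.2, hxx.1])
      have e3 : q1 x y = 0 := by simp only [hq1]; exact if_neg (by
        rintro ⟨hx, -⟩
        have h1x := mem_Ioo.mp h1.1
        have hxx := mem_Ioo.mp hx
        linarith [h1x.2, hxx.1])
      have e4 : q2 x y = 0 := by simp only [hq2]; exact if_neg (by
        rintro ⟨hx, -⟩
        have h1x := mem_Ioo.mp h1.1
        have hxx := mem_Ioo.mp hx
        linarith [h1x.2, hxx.1])
      have e1 : r1 x y = ker p δ x y := by simp only [hr1]; exact if_pos h1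
      rw [e1, e2, e3, e4, add_zero, add_zero, add_zero, if_pos hv1]
    · by_cases h2 : x ∈ Ico (-1 + δ) (0 : ℝ) ∧ y ∈ Ioo (-2 : ℝ) (-1)
      · have hv2 : δ < |v x - v y| := by
          rw [abs_sub_comm]; exact excH_R1 hδ hδ1 hε h2.2 h2.1
        have e1 : r1 x y = 0 := by simp only [hr1]; exact if_neg (by
          rintro ⟨hx, -⟩
          have h2x := mem_Ico.mp h2.1
          have hxx := mem_Ioo.mp hx
          linarith [h2x.1, hxx.2])
        have e3 : q1 x y = 0 := by simp only [hq1]; exact if_neg (by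
          rintro ⟨hx, -⟩
          have h2x := mem_Ico.mp h2.1
          have hxx := mem_Ioo.mp hx
          linarith [h2x.2, hxx.1])
        have e4 : q2 x y = 0 := by simp only [hq2]; exact if_neg (by
          rintro ⟨hx, -⟩
          have h2x := mem_Ico.mp h2.1
          have hxx := mem_Ioo.mp hx
          linarith [h2x.2, hxx.1])
        have e2 : r2 x y = ker p δ x y := by simp only [hr2]; exact if_pos h2
        rw [e1, e2, e3, e4, zero_add, add_zero, add_zero, if_pos hv2]
      · by_cases h3 : x ∈ Ioo (1 : ℝ) (1 + δ) ∧ y ∈ Ioo (1 - 2*δ) (1 - δ)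
        · have h3x := mem_Ioo.mp h3.1
          have h3y := mem_Ioo.mp h3.2
          have hv3 : δ < |v x - v y| := by
            rw [hv]
            refine excH_R3 hδ hδ1 hε ?_ ?_
            · exact mem_Ioo.mpr ⟨h3x.1, by linarith⟩
            · exact mem_Ioo.mpr ⟨by linarith, h3y.2⟩
          have e1 : r1 x y = 0 := by simp only [hr1]; exact if_neg (by
            rintro ⟨hx, -⟩
            have hxx := mem_Ioo.mp hx
            linarith [hxx.2, h3x.1])
          have e2 : r2 x y = 0 := by simp only [hr2]; exact if_neg (by
            rintro ⟨hx, -⟩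
            have hxx := mem_Ico.mp hx
            linarith [hxx.2, h3x.1])
          have e4 : q2 x y = 0 := by simp only [hq2]; exact if_neg (by
            rintro ⟨-, hy⟩
            have hyy := mem_Ioo.mp hy
            linarith [hyy.2, h3y.1])
          have e3 : q1 x y = ker p δ x y := by simp only [hq1]; exact if_pos h3
          rw [e1, e2, e3, e4, zero_add, zero_add, add_zero, if_pos hv3]
        · by_cases h4 : x ∈ Ioo (1 : ℝ) (2 - 2*δ) ∧ y ∈ Ioo (x - 1) (1 - 2*δ)
          · have h4x := mem_Ioo.mp h4.1
            have h4y := mem_Ioo.mp h4.2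
            have hv4 : δ < |v x - v y| := by
              rw [hv]
              refine excH_R3 hδ hδ1 hε ?_ ?_
              · exact mem_Ioo.mpr ⟨h4x.1, by linarith⟩
              · exact mem_Ioo.mpr ⟨by linarith, by linarith⟩
            have e1 : r1 x y = 0 := by simp only [hr1]; exact if_neg (by
              rintro ⟨hx, -⟩
              have hxx := mem_Ioo.mp hx
              linarith [hxx.2, h4x.1])
            have e2 : r2 x y = 0 := by simp only [hr2]; exact if_neg (by
              rintro ⟨hx, -⟩
              have hxx := mem_Ico.mp hx
              linarith [hxx.2, h4x.1])
            have e3 : q1 x y = 0 := by simp only [hq1]; exact if_neg (by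
              rintro ⟨-, hy⟩
              have hyy := mem_Ioo.mp hy
              linarith [hyy.1, h4y.2])
            have e4 : q2 x y = ker p δ x y := by simp only [hq2]; exact if_pos h4
            rw [e1, e2, e3, e4, zero_add, zero_add, zero_add, if_pos hv4]
          · have e1 : r1 x y = 0 := if_neg h1
            have e2 : r2 x y = 0 := if_neg h2
            have e3 : q1 x y = 0 := if_neg h3
            have e4 : q2 x y = 0 := if_neg h4
            rw [e1, e2, e3, e4, add_zero, add_zero, add_zero]
            exact zero_le
  -- the upper bound
  have hupper : Idel p δ u ≤ (∫⁻ x, ∫⁻ y, f1 x y) + (∫⁻ x, ∫⁻ y, f2 x y)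
      + (∫⁻ x, ∫⁻ y, f3 x y) + (∫⁻ x, ∫⁻ y, f4 x y) := by
    rw [← iint_add4 f1 f2 f3 f4 mf1 mf2 mf3 mf4]
    show (∫⁻ x : ℝ, ∫⁻ y : ℝ,
      if δ < |u x - u y| then ENNReal.ofReal (δ ^ p / |x - y| ^ (1 + p)) else 0) ≤ _
    exact lintegral_mono fun x => lintegral_mono fun y => hpt_up x y
  -- the lower bound
  have hlower : (∫⁻ x, ∫⁻ y, r1 x y) + (∫⁻ x, ∫⁻ y, r2 x y)
      + (∫⁻ x, ∫⁻ y, q1 x y) + (∫⁻ x, ∫⁻ y, q2 x y) ≤ Idel p δ v := by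
    rw [← iint_add4 r1 r2 q1 q2 mr1 mr2 mq1 mq2]
    show _ ≤ (∫⁻ x : ℝ, ∫⁻ y : ℝ,
      if δ < |v x - v y| then ENNReal.ofReal (δ ^ p / |x - y| ^ (1 + p)) else 0)
    exact lintegral_mono fun x => lintegral_mono fun y => hpt_lo x y
  -- boundary identifications
  have hf1r1 : (∫⁻ x, ∫⁻ y, f1 x y) = (∫⁻ x, ∫⁻ y, r1 x y) := by
    apply lintegral_congr_ae
    have hae : ∀ᵐ x : ℝ, x ≠ -1 := by
      rw [ae_iff]
      simp only [ne_eq, not_not, setOf_eq_eq_singleton]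
      exact measure_singleton _
    filter_upwards [hae] with x hx
    refine lintegral_congr fun y => ?_
    have hiff : (x ∈ Ioc (-2 : ℝ) (-1)) ↔ (x ∈ Ioo (-2 : ℝ) (-1)) := by
      simp only [mem_Ioc, mem_Ioo]
      constructor
      · rintro ⟨ha, hb⟩; exact ⟨ha, lt_of_le_of_ne hb hx⟩
      · rintro ⟨ha, hb⟩; exact ⟨ha, hb.le⟩
    simp only [hf1, hr1, hiff]
  have hf2r2 : (∫⁻ x, ∫⁻ y, f2 x y) = (∫⁻ x, ∫⁻ y, r2 x y) := by
    refine lintegral_congr fun x => ?_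
    by_cases hx : x ∈ Ico (-1 + δ) (0 : ℝ)
    · calc ∫⁻ y, f2 x y = ∫⁻ y in Ioc (-2 : ℝ) (-1), ker p δ x y := by
            rw [← lintegral_indicator measurableSet_Ioc]
            exact lintegral_congr fun y => by
              simp only [hf2, hx, true_and, Set.indicator_apply]
        _ = ∫⁻ y in Ioo (-2 : ℝ) (-1), ker p δ x y := by
            rw [← Measure.restrict_congr_set Ioo_ae_eq_Ioc]
        _ = ∫⁻ y, r2 x y := by
            rw [← lintegral_indicator measurableSet_Ioo]
            exact lintegral_congr fun y => by
              simp only [hr2, hx, true_and, Set.indicator_apply]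
    · have e1 : ∀ y, f2 x y = 0 := fun y => by
        simp only [hf2]; exact if_neg (by rintro ⟨h, -⟩; exact hx h)
      have e2 : ∀ y, r2 x y = 0 := fun y => by
        simp only [hr2]; exact if_neg (by rintro ⟨h, -⟩; exact hx h)
      rw [lintegral_congr e1, lintegral_congr e2]
  -- bound on the sliver term
  set T : ℝ := 2 * (δ ^ p / (p * (δ/4) ^ p)) with hTdef
  have hTnn : 0 ≤ T := by positivity
  have htail : ∀ c : ℝ, (∫⁻ z : ℝ, (if δ/4 ≤ |z - c|
      then ENNReal.ofReal (δ ^ p / |z - c| ^ (1 + p)) else 0)) ≤ ENNReal.ofReal T :=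
    fun c => tail_bound p δ (δ/4) hp hδ (by linarith) c
  set f3x : ℝ → ℝ → ℝ≥0∞ := fun x y =>
    if x ∈ Wset δ ε ∧ δ/4 ≤ |x - y| then ker p δ x y else 0 with hf3x
  set f3y : ℝ → ℝ → ℝ≥0∞ := fun x y =>
    if y ∈ Wset δ ε ∧ δ/4 ≤ |x - y| then ker p δ x y else 0 with hf3y
  have mf3x : Measurable (Function.uncurry f3x) := by
    rw [hf3x]
    apply Measurable.ite ?_ hkm measurable_const
    apply MeasurableSet.inter
    · exact hWm.preimage measurable_fst
    · exact measurableSet_le measurable_const (measurable_fst.sub measurable_snd).abs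
  have mf3y : Measurable (Function.uncurry f3y) := by
    rw [hf3y]
    apply Measurable.ite ?_ hkm measurable_const
    apply MeasurableSet.inter
    · exact hWm.preimage measurable_snd
    · exact measurableSet_le measurable_const (measurable_fst.sub measurable_snd).abs
  have hb3x : (∫⁻ x, ∫⁻ y, f3x x y) ≤ ENNReal.ofReal T * ENNReal.ofReal (4 * ε * δ) := by
    have hinner : ∀ x, (∫⁻ y, f3x x y)
        ≤ (if x ∈ Wset δ ε then ENNReal.ofReal T else 0) := by
      intro x
      by_cases hx : x ∈ Wset δ ε
      · rw [if_pos hx]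
        calc ∫⁻ y, f3x x y
            = ∫⁻ y, (if δ/4 ≤ |y - x| then ENNReal.ofReal (δ ^ p / |y - x| ^ (1 + p)) else 0) := by
              refine lintegral_congr fun y => ?_
              simp only [hf3x, hx, true_and, ker, abs_sub_comm x y]
          _ ≤ ENNReal.ofReal T := htail x
      · rw [if_neg hx]
        have e : ∀ y, f3x x y = 0 := fun y => by
          simp only [hf3x]; exact if_neg (by rintro ⟨h, -⟩; exact hx h)
        rw [lintegral_congr e, lintegral_zero]
    calc (∫⁻ x, ∫⁻ y, f3x x y) ≤ ∫⁻ x, (if x ∈ Wset δ ε then ENNReal.ofReal T else 0) :=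
          lintegral_mono hinner
      _ = ENNReal.ofReal T * volume (Wset δ ε) := lint_if_const hWm _
      _ ≤ ENNReal.ofReal T * ENNReal.ofReal (4 * ε * δ) :=
          mul_le_mul_right (Wset_volume hδ hε) _
  have hb3y : (∫⁻ x, ∫⁻ y, f3y x y) ≤ ENNReal.ofReal T * ENNReal.ofReal (4 * ε * δ) := by
    rw [lintegral_lintegral_swap mf3y.aemeasurable]
    have hinner : ∀ y, (∫⁻ x, f3y x y)
        ≤ (if y ∈ Wset δ ε then ENNReal.ofReal T else 0) := by
      intro y
      by_cases hy : y ∈ Wset δ ε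
      · rw [if_pos hy]
        calc ∫⁻ x, f3y x y
            = ∫⁻ x, (if δ/4 ≤ |x - y| then ENNReal.ofReal (δ ^ p / |x - y| ^ (1 + p)) else 0) := by
              refine lintegral_congr fun x => ?_
              simp only [hf3y, hy, true_and, ker]
          _ ≤ ENNReal.ofReal T := htail y
      · rw [if_neg hy]
        have e : ∀ x, f3y x y = 0 := fun x => by
          simp only [hf3y]; exact if_neg (by rintro ⟨h, -⟩; exact hy h)
        rw [lintegral_congr e, lintegral_zero]
    calc (∫⁻ y, ∫⁻ x, f3y x y) ≤ ∫⁻ y, (if y ∈ Wset δ ε then ENNReal.ofReal T else 0) :=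
          lintegral_mono hinner
      _ = ENNReal.ofReal T * volume (Wset δ ε) := lint_if_const hWm _
      _ ≤ ENNReal.ofReal T * ENNReal.ofReal (4 * ε * δ) :=
          mul_le_mul_right (Wset_volume hδ hε) _
  have hIF3 : (∫⁻ x, ∫⁻ y, f3 x y)
      ≤ ENNReal.ofReal T * ENNReal.ofReal (4 * ε * δ)
        + ENNReal.ofReal T * ENNReal.ofReal (4 * ε * δ) := by
    have hsplit : ∀ x y, f3 x y ≤ f3x x y + f3y x y := by
      intro x y
      by_cases hc : (x ∈ Wset δ ε ∨ y ∈ Wset δ ε) ∧ δ/4 ≤ |x - y|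
      · have e : f3 x y = ker p δ x y := by simp only [hf3]; exact if_pos hc
        rw [e]
        rcases hc.1 with hW | hW
        · have e2 : f3x x y = ker p δ x y := by simp only [hf3x]; exact if_pos ⟨hW, hc.2⟩
          rw [e2]; exact le_add_right le_rfl
        · have e2 : f3y x y = ker p δ x y := by simp only [hf3y]; exact if_pos ⟨hW, hc.2⟩
          rw [e2]; exact le_add_left le_rfl
      · have e : f3 x y = 0 := by simp only [hf3]; exact if_neg hc
        rw [e]; exact zero_le
    have hadd : ∫⁻ x, ∫⁻ y, (f3x x y + f3y x y)
        = (∫⁻ x, ∫⁻ y, f3x x y) + (∫⁻ x, ∫⁻ y, f3y x y) := by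
      have e : ∀ x, ∫⁻ y, (f3x x y + f3y x y) = (∫⁻ y, f3x x y) + (∫⁻ y, f3y x y) :=
        fun x => lintegral_add_left (mf3x.comp measurable_prodMk_left) _
      simp only [e]
      exact lintegral_add_left mf3x.lintegral_prod_right' _
    calc (∫⁻ x, ∫⁻ y, f3 x y) ≤ ∫⁻ x, ∫⁻ y, (f3x x y + f3y x y) :=
          lintegral_mono fun x => lintegral_mono fun y => hsplit x y
      _ = (∫⁻ x, ∫⁻ y, f3x x y) + (∫⁻ x, ∫⁻ y, f3y x y) := hadd
      _ ≤ _ := add_le_add hb3x hb3y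
  -- bound on the far term
  have hIF4 : (∫⁻ x, ∫⁻ y, f4 x y)
      ≤ ENNReal.ofReal (δ ^ p / (1/2 : ℝ) ^ (1 + p)) * ENNReal.ofReal 4 * ENNReal.ofReal 4 := by
    have hh : ∀ x y, f4 x y ≠ 0 → x ∈ Ioo (-2 : ℝ) 2 ∧ y ∈ Ioo (-2 : ℝ) 2
        ∧ f4 x y ≤ ENNReal.ofReal (δ ^ p / (1/2 : ℝ) ^ (1 + p)) := by
      intro x y h0
      have hcond : x ∈ Ioo (-2 : ℝ) 2 ∧ y ∈ Ioo (-2 : ℝ) 2 ∧ 1/2 ≤ |x - y| := by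
        by_contra hcc
        exact h0 (by simp only [hf4]; exact if_neg hcc)
      refine ⟨hcond.1, hcond.2.1, ?_⟩
      have e : f4 x y = ker p δ x y := by simp only [hf4]; exact if_pos hcond
      rw [e]
      exact ker_le hδ hp (by norm_num) hcond.2.2
    have h := iint_le_of_le measurableSet_Ioo measurableSet_Ioo f4
      (ENNReal.ofReal (δ ^ p / (1/2 : ℝ) ^ (1 + p))) hh
    calc (∫⁻ x, ∫⁻ y, f4 x y)
        ≤ ENNReal.ofReal (δ ^ p / (1/2 : ℝ) ^ (1 + p)) * volume (Ioo (-2 : ℝ) 2)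
          * volume (Ioo (-2 : ℝ) 2) := h
      _ = _ := by rw [Real.volume_Ioo]; norm_num
  -- lower bound for the near rectangle
  have hQ1 : ENNReal.ofReal (δ ^ p / (3*δ) ^ (1 + p)) * ENNReal.ofReal δ * ENNReal.ofReal δ
      ≤ (∫⁻ x, ∫⁻ y, q1 x y) := by
    have hh : ∀ x ∈ Ioo (1 : ℝ) (1 + δ), ∀ y ∈ Ioo (1 - 2*δ) (1 - δ),
        ENNReal.ofReal (δ ^ p / (3*δ) ^ (1 + p)) ≤ q1 x y := by
      intro x hx y hy
      have hx' := mem_Ioo.mp hx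
      have hy' := mem_Ioo.mp hy
      have e : q1 x y = ker p δ x y := by simp only [hq1]; exact if_pos ⟨hx, hy⟩
      rw [e]
      have h0 : 0 < x - y := by linarith
      refine ker_ge hδ hp ?_ ?_
      · rw [abs_of_pos h0]; linarith
      · rw [abs_of_pos h0]; linarith
    have h := iint_ge_of_ge measurableSet_Ioo measurableSet_Ioo q1
      (ENNReal.ofReal (δ ^ p / (3*δ) ^ (1 + p))) hh
    calc ENNReal.ofReal (δ ^ p / (3*δ) ^ (1 + p)) * ENNReal.ofReal δ * ENNReal.ofReal δ
        = ENNReal.ofReal (δ ^ p / (3*δ) ^ (1 + p)) * volume (Ioo (1 - 2*δ) (1 - δ))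
          * volume (Ioo (1 : ℝ) (1 + δ)) := by
          have e1 : (1 : ℝ) - δ - (1 - 2*δ) = δ := by ring
          have e2 : (1 : ℝ) + δ - 1 = δ := by ring
          rw [Real.volume_Ioo, Real.volume_Ioo, e1, e2]
      _ ≤ _ := h
  -- lower bound for the logarithmic part
  have hq2val : ∀ x ∈ Ioo (1 : ℝ) (2 - 2*δ),
      ENNReal.ofReal (δ ^ p * ((x - (1 - 2*δ))⁻¹ - 1)) ≤ ∫⁻ y, q2 x y := by
    intro x hx
    have hx' := mem_Ioo.mp hx
    have hab : x - 1 ≤ 1 - 2*δ := by linarith [hx'.2]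
    have hcont : ContinuousOn (fun y : ℝ => δ ^ p * ((x - y) ^ 2)⁻¹) (Icc (x-1) (1-2*δ)) := by
      apply ContinuousOn.mul continuousOn_const
      apply ContinuousOn.inv₀ ((continuous_const.sub continuous_id).pow 2).continuousOn
      intro y hy
      have hy' := mem_Icc.mp hy
      have : 0 < x - y := by linarith [hx'.2, hy'.2]
      exact pow_ne_zero 2 this.ne'
    have hnn : ∀ y ∈ Ioo (x-1) (1-2*δ), 0 ≤ δ ^ p * ((x - y) ^ 2)⁻¹ := by
      intro y hy; positivity
    have hval : ∫ y in (x-1)..(1-2*δ), δ ^ p * ((x - y) ^ 2)⁻¹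
        = δ ^ p * ((x - (1 - 2*δ))⁻¹ - 1) := by
      rw [intervalIntegral.integral_const_mul]
      congr 1
      have hcomp : ∫ y in (x-1)..(1-2*δ), ((x - y) ^ 2)⁻¹
          = ∫ t in (x-(1-2*δ))..(x-(x-1)), (t ^ 2)⁻¹ :=
        intervalIntegral.integral_comp_sub_left (fun t => (t ^ 2)⁻¹) x
      have hz : ∫ t in (x-(1-2*δ))..(x-(x-1)), (t ^ 2)⁻¹
          = ∫ t in (x-(1-2*δ))..(x-(x-1)), t ^ (-2 : ℤ) := by
        refine intervalIntegral.integral_congr fun t ht => ?_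
        rw [zpow_neg, zpow_two, pow_two]
      rw [hcomp, hz, integral_zpow]
      · have e1 : x - (x - 1) = 1 := by ring
        rw [e1]
        norm_num
        ring
      · refine Or.inr ⟨by decide, notMem_uIcc_of_lt ?_ ?_⟩
        · linarith [hx'.1]
        · linarith
    have h1 := lint_if_Ioo_eq (x-1) (1-2*δ) hab (fun y => δ ^ p * ((x - y) ^ 2)⁻¹) hcont hnn
    rw [hval] at h1
    calc ENNReal.ofReal (δ ^ p * ((x - (1 - 2*δ))⁻¹ - 1))
        = ∫⁻ y, (if y ∈ Ioo (x-1) (1-2*δ)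
            then ENNReal.ofReal (δ ^ p * ((x - y) ^ 2)⁻¹) else 0) := h1.symm
      _ ≤ ∫⁻ y, q2 x y := by
          refine lintegral_mono fun y => ?_
          by_cases hy : y ∈ Ioo (x-1) (1-2*δ)
          · rw [if_pos hy]
            have e : q2 x y = ker p δ x y := by simp only [hq2]; exact if_pos ⟨hx, hy⟩
            rw [e]
            show _ ≤ ENNReal.ofReal (δ ^ p / |x - y| ^ (1 + p))
            apply ENNReal.ofReal_le_ofReal
            have hy' := mem_Ioo.mp hy
            have h0 : 0 < x - y := by linarith [hx'.1]
            have hlt1 : x - y < 1 := by linarith [hy'.1]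
            rw [abs_of_pos h0]
            have hexp : (x - y) ^ (1 + p) ≤ (x - y) ^ 2 := by
              have h2 : (x - y) ^ ((2 : ℕ) : ℝ) = (x - y) ^ (2 : ℕ) :=
                Real.rpow_natCast _ 2
              calc (x - y) ^ (1 + p) ≤ (x - y) ^ ((2 : ℕ) : ℝ) :=
                    Real.rpow_le_rpow_of_exponent_ge h0 hlt1.le (by push_cast; linarith)
                _ = (x - y) ^ 2 := h2
            rw [← div_eq_mul_inv]
            exact div_le_div_of_nonneg_left (Real.rpow_nonneg hδ.le p)
              (Real.rpow_pos_of_pos h0 _) hexp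
          · rw [if_neg hy]; exact zero_le
  have hQ2 : ENNReal.ofReal (δ ^ p * (Real.log (1/(2*δ)) - (1 - 2*δ)))
      ≤ (∫⁻ x, ∫⁻ y, q2 x y) := by
    have h12 : (1 : ℝ) ≤ 2 - 2*δ := by linarith
    have hcont : ContinuousOn (fun x : ℝ => δ ^ p * ((x - (1 - 2*δ))⁻¹ - 1))
        (Icc 1 (2-2*δ)) := by
      apply ContinuousOn.mul continuousOn_const
      apply ContinuousOn.sub ?_ continuousOn_const
      apply ContinuousOn.inv₀ ((continuous_id.sub continuous_const).continuousOn)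
      intro x hx
      have hx' := mem_Icc.mp hx
      have : 0 < x - (1 - 2*δ) := by linarith [hx'.1]
      exact ne_of_gt this
    have hnn : ∀ x ∈ Ioo (1 : ℝ) (2-2*δ), 0 ≤ δ ^ p * ((x - (1 - 2*δ))⁻¹ - 1) := by
      intro x hx
      have hx' := mem_Ioo.mp hx
      have h0 : 0 < x - (1 - 2*δ) := by linarith [hx'.1]
      have h1 : x - (1 - 2*δ) ≤ 1 := by linarith [hx'.2]
      have hinv : (1 : ℝ) ≤ (x - (1 - 2*δ))⁻¹ := by
        rw [← one_div]
        exact one_le_one_div h0 h1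
      have := Real.rpow_nonneg hδ.le p
      nlinarith
    have hval : ∫ x in (1 : ℝ)..(2-2*δ), δ ^ p * ((x - (1 - 2*δ))⁻¹ - 1)
        = δ ^ p * (Real.log (1/(2*δ)) - (1 - 2*δ)) := by
      rw [intervalIntegral.integral_const_mul]
      congr 1
      have hi1 : IntervalIntegrable (fun x : ℝ => (x - (1 - 2*δ))⁻¹) volume 1 (2-2*δ) := by
        apply ContinuousOn.intervalIntegrable
        apply ContinuousOn.inv₀ ((continuous_id.sub continuous_const).continuousOn)
        intro x hx
        rw [uIcc_of_le h12] at hx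
        have hx' := mem_Icc.mp hx
        have : 0 < x - (1 - 2*δ) := by linarith [hx'.1]
        exact ne_of_gt this
      rw [intervalIntegral.integral_sub hi1 intervalIntegrable_const,
        intervalIntegral.integral_const]
      have hcs := intervalIntegral.integral_comp_sub_right (fun t : ℝ => t⁻¹) (1 - 2*δ)
        (a := 1) (b := 2-2*δ)
      rw [hcs]
      have e1 : (1 : ℝ) - (1 - 2*δ) = 2*δ := by ring
      have e2 : (2 - 2*δ) - (1 - 2*δ) = 1 := by ring
      rw [e1, e2, integral_inv_of_pos (by linarith) one_pos]
      have e3 : (1 : ℝ) / (2*δ) = 1/(2*δ) := rfl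
      rw [smul_eq_mul]
      ring_nf
    have h1 := lint_if_Ioo_eq 1 (2-2*δ) h12 (fun x => δ ^ p * ((x - (1 - 2*δ))⁻¹ - 1))
      hcont hnn
    rw [hval] at h1
    calc ENNReal.ofReal (δ ^ p * (Real.log (1/(2*δ)) - (1 - 2*δ)))
        = ∫⁻ x, (if x ∈ Ioo (1 : ℝ) (2-2*δ)
            then ENNReal.ofReal (δ ^ p * ((x - (1 - 2*δ))⁻¹ - 1)) else 0) := h1.symm
      _ ≤ ∫⁻ x, ∫⁻ y, q2 x y := by
          refine lintegral_mono fun x => ?_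
          by_cases hx : x ∈ Ioo (1 : ℝ) (2-2*δ)
          · rw [if_pos hx]; exact hq2val x hx
          · rw [if_neg hx]; exact zero_le
  -- finiteness of the common parts
  have hfin : ∀ (s t : Set ℝ), MeasurableSet s → MeasurableSet t →
      ∀ F : ℝ → ℝ → ℝ≥0∞, (∀ x y, F x y ≠ 0 → x ∈ s ∧ y ∈ t ∧ F x y
        ≤ ENNReal.ofReal (δ ^ p / δ ^ (1 + p))) →
      volume s ≠ ⊤ → volume t ≠ ⊤ → (∫⁻ x, ∫⁻ y, F x y) ≠ ⊤ := by
    intro s t hs ht F hF hvs hvt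
    have h := iint_le_of_le hs ht F (ENNReal.ofReal (δ ^ p / δ ^ (1 + p))) hF
    exact ne_top_of_le_ne_top
      (ENNReal.mul_ne_top (ENNReal.mul_ne_top ENNReal.ofReal_ne_top hvt) hvs) h
  have hfin1 : (∫⁻ x, ∫⁻ y, r1 x y) ≠ ⊤ := by
    refine hfin (Ioo (-2 : ℝ) (-1)) (Ico (-1 + δ) (0 : ℝ)) measurableSet_Ioo measurableSet_Ico r1 ?_ ?_ ?_
    · intro x y h0
      have hcond : x ∈ Ioo (-2 : ℝ) (-1) ∧ y ∈ Ico (-1 + δ) (0 : ℝ) := by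
        by_contra hcc; exact h0 (by simp only [hr1]; exact if_neg hcc)
      refine ⟨hcond.1, hcond.2, ?_⟩
      have e : r1 x y = ker p δ x y := by simp only [hr1]; exact if_pos hcond
      rw [e]
      have hx' := mem_Ioo.mp hcond.1
      have hy' := mem_Ico.mp hcond.2
      refine ker_le hδ hp hδ ?_
      have : δ ≤ y - x := by linarith
      calc δ ≤ y - x := this
        _ ≤ |x - y| := by rw [abs_sub_comm]; exact le_abs_self _
    · rw [Real.volume_Ioo]; exact ENNReal.ofReal_ne_top
    · rw [Real.volume_Ico]; exact ENNReal.ofReal_ne_top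
  have hfin2 : (∫⁻ x, ∫⁻ y, r2 x y) ≠ ⊤ := by
    refine hfin (Ico (-1 + δ) (0 : ℝ)) (Ioo (-2 : ℝ) (-1)) measurableSet_Ico measurableSet_Ioo r2 ?_ ?_ ?_
    · intro x y h0
      have hcond : x ∈ Ico (-1 + δ) (0 : ℝ) ∧ y ∈ Ioo (-2 : ℝ) (-1) := by
        by_contra hcc; exact h0 (by simp only [hr2]; exact if_neg hcc)
      refine ⟨hcond.1, hcond.2, ?_⟩
      have e : r2 x y = ker p δ x y := by simp only [hr2]; exact if_pos hcond
      rw [e]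
      have hx' := mem_Ico.mp hcond.1
      have hy' := mem_Ioo.mp hcond.2
      refine ker_le hδ hp hδ ?_
      have : δ ≤ x - y := by linarith
      exact le_trans this (le_abs_self _)
    · rw [Real.volume_Ico]; exact ENNReal.ofReal_ne_top
    · rw [Real.volume_Ioo]; exact ENNReal.ofReal_ne_top
  -- the key real comparison
  have h4p : (0 : ℝ) < 4 ^ p := Real.rpow_pos_of_pos (by norm_num) p
  have h3p : (0 : ℝ) < 3 ^ (1 + p) := Real.rpow_pos_of_pos (by norm_num) _
  have h2p : (0 : ℝ) < 2 ^ (1 + p) := Real.rpow_pos_of_pos (by norm_num) _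
  have hδp : (0 : ℝ) < δ ^ p := Real.rpow_pos_of_pos hδ p
  have hE3 : T * (4 * ε * δ) + T * (4 * ε * δ) < δ ^ p / (3*δ) ^ (1 + p) * δ * δ := by
    have e1 : (δ/4 : ℝ) ^ p = δ ^ p / 4 ^ p := Real.div_rpow hδ.le (by norm_num : (0:ℝ) ≤ 4) p
    have e2 : (3*δ : ℝ) ^ (1 + p) = 3 ^ (1 + p) * δ ^ (1 + p) :=
      Real.mul_rpow (by norm_num) hδ.le
    have e3 : δ ^ (1 + p) = δ * δ ^ p := by rw [Real.rpow_add hδ, Real.rpow_one]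
    have hTval : T = 2 * 4 ^ p / p := by
      rw [hTdef, e1]
      field_simp
    have hRval : δ ^ p / (3*δ) ^ (1 + p) * δ * δ = δ / 3 ^ (1 + p) := by
      rw [e2, e3]
      field_simp
    rw [hTval, hRval]
    have hsum : 2 * 4 ^ p / p * (4 * ε * δ) + 2 * 4 ^ p / p * (4 * ε * δ)
        = 16 * ε * δ * 4 ^ p / p := by field_simp; ring
    rw [hsum, div_lt_div_iff₀ hp0 h3p]
    have hkey : ε * (32 * 4 ^ p * 3 ^ (1 + p)) < p :=
      (lt_div_iff₀ (by positivity)).1 hεp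
    have hmul := mul_lt_mul_of_pos_left hkey hδ
    nlinarith [mul_pos (mul_pos (mul_pos hε hδ) h4p) h3p]
  have hE4 : δ ^ p / (1/2 : ℝ) ^ (1 + p) * 4 * 4
      ≤ δ ^ p * (Real.log (1/(2*δ)) - (1 - 2*δ)) := by
    have e1 : ((1/2 : ℝ)) ^ (1 + p) = (2 ^ (1 + p))⁻¹ := by
      rw [one_div, Real.inv_rpow (by norm_num)]
    rw [e1, div_eq_mul_inv, inv_inv]
    have hlog2 : Real.log 2 ≤ 1 := by
      linarith [Real.log_le_sub_one_of_pos (by norm_num : (0 : ℝ) < 2)]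
    have hlogv : Real.log (1/(2*δ)) = Real.log δ⁻¹ - Real.log 2 := by
      rw [one_div, Real.log_inv, Real.log_mul (by norm_num) hδ.ne', Real.log_inv]
      ring
    have key : 16 * 2 ^ (1 + p) ≤ Real.log (1/(2*δ)) - (1 - 2*δ) := by
      rw [hlogv]; linarith
    calc δ ^ p * 2 ^ (1 + p) * 4 * 4 = δ ^ p * (16 * 2 ^ (1 + p)) := by ring
      _ ≤ δ ^ p * (Real.log (1/(2*δ)) - (1 - 2*δ)) :=
          mul_le_mul_of_nonneg_left key hδp.le
  have hQ2nn : 0 ≤ δ ^ p * (Real.log (1/(2*δ)) - (1 - 2*δ)) := by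
    have : δ ^ p / (1/2 : ℝ) ^ (1 + p) * 4 * 4 ≥ 0 := by positivity
    linarith [hE4]
  -- combine the error bounds against the gains
  have hBC : (∫⁻ x, ∫⁻ y, f3 x y) + (∫⁻ x, ∫⁻ y, f4 x y)
      < (∫⁻ x, ∫⁻ y, q1 x y) + (∫⁻ x, ∫⁻ y, q2 x y) := by
    have hL : (∫⁻ x, ∫⁻ y, f3 x y) + (∫⁻ x, ∫⁻ y, f4 x y)
        ≤ ENNReal.ofReal (T * (4 * ε * δ) + T * (4 * ε * δ)
            + δ ^ p / (1/2 : ℝ) ^ (1 + p) * 4 * 4) := by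
      calc (∫⁻ x, ∫⁻ y, f3 x y) + (∫⁻ x, ∫⁻ y, f4 x y)
          ≤ (ENNReal.ofReal T * ENNReal.ofReal (4 * ε * δ)
              + ENNReal.ofReal T * ENNReal.ofReal (4 * ε * δ))
            + ENNReal.ofReal (δ ^ p / (1/2 : ℝ) ^ (1 + p)) * ENNReal.ofReal 4
              * ENNReal.ofReal 4 := add_le_add hIF3 hIF4
        _ = _ := by
            rw [← ENNReal.ofReal_mul hTnn, ← ENNReal.ofReal_mul (by positivity),
              ← ENNReal.ofReal_mul (by positivity),
              ← ENNReal.ofReal_add (by positivity) (by positivity),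
              ← ENNReal.ofReal_add (by positivity) (by positivity)]
    have hR : ENNReal.ofReal (δ ^ p / (3*δ) ^ (1 + p) * δ * δ
          + δ ^ p * (Real.log (1/(2*δ)) - (1 - 2*δ)))
        ≤ (∫⁻ x, ∫⁻ y, q1 x y) + (∫⁻ x, ∫⁻ y, q2 x y) := by
      rw [ENNReal.ofReal_add (by positivity) hQ2nn]
      refine add_le_add ?_ hQ2
      calc ENNReal.ofReal (δ ^ p / (3*δ) ^ (1 + p) * δ * δ)
          = ENNReal.ofReal (δ ^ p / (3*δ) ^ (1 + p)) * ENNReal.ofReal δ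
            * ENNReal.ofReal δ := by
            rw [← ENNReal.ofReal_mul (by positivity), ← ENNReal.ofReal_mul (by positivity)]
        _ ≤ _ := hQ1
    refine lt_of_le_of_lt hL (lt_of_lt_of_le ?_ hR)
    rw [ENNReal.ofReal_lt_ofReal_iff (by positivity)]
    linarith
  have hA : (∫⁻ x, ∫⁻ y, r1 x y) + (∫⁻ x, ∫⁻ y, r2 x y) ≠ ⊤ :=
    ENNReal.add_ne_top.mpr ⟨hfin1, hfin2⟩
  calc Idel p δ u
      ≤ (∫⁻ x, ∫⁻ y, f1 x y) + (∫⁻ x, ∫⁻ y, f2 x y) + (∫⁻ x, ∫⁻ y, f3 x y)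
        + (∫⁻ x, ∫⁻ y, f4 x y) := hupper
    _ = ((∫⁻ x, ∫⁻ y, r1 x y) + (∫⁻ x, ∫⁻ y, r2 x y))
        + ((∫⁻ x, ∫⁻ y, f3 x y) + (∫⁻ x, ∫⁻ y, f4 x y)) := by
        rw [hf1r1, hf2r2, add_assoc]
    _ < ((∫⁻ x, ∫⁻ y, r1 x y) + (∫⁻ x, ∫⁻ y, r2 x y))
        + ((∫⁻ x, ∫⁻ y, q1 x y) + (∫⁻ x, ∫⁻ y, q2 x y)) :=
        ENNReal.add_lt_add_left hA hBC
    _ ≤ Idel p δ v := by rw [← add_assoc]; exact hlower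
end
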